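/- Let 1 ≤ k < n and S = {1,…,k}. The 𝟙_S-monotone paths on the permutohedron Π_{n−1} starting at the identity permutation (1,2,…,n) are in bijection with rectangular lattice permutations of size k × (n−k): sequences a₁,…,a_{k(n−k)} ∈ [k] in which each j ∈ [k] occurs exactly n−k times and, for every prefix, the number of occurrences of i is at least the number of occurrences of i+1 for each i. In particular, every such monotone path has length exactly k(n−k) and ends at the permutation (n−k+1,…,n,1,…,n−k). -/

import Mathlib

/-- A vertex of the permutohedron `Π_{n−1}`: a permutation of `(1,2,…,n)`. -/
def IsPermVertex (n : ℕ) (x : Fin n → ℝ) : Prop :=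
  ∃ σ : Equiv.Perm (Fin n), ∀ i, x i = ((σ i : ℕ) : ℝ) + 1

/-- The permutohedron `Π_{n−1} ⊂ ℝⁿ`. -/
def Permutohedron (n : ℕ) : Set (Fin n → ℝ) :=
  convexHull ℝ {x | IsPermVertex n x}

/-- `[u,v]` is an edge of `P`: a face that is the segment between the two
distinct points `u` and `v`. -/
def IsEdgeOf {n : ℕ} (P : Set (Fin n → ℝ)) (u v : Fin n → ℝ) : Prop :=
  u ≠ v ∧ ∃ c : Fin n → ℝ,
    {x | x ∈ P ∧ ∀ y ∈ P, ∑ i, c i * y i ≤ ∑ i, c i * x i} = segment ℝ u v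

/-- `𝟙_S(x)` for `S = {1,…,k}` (the first `k` coordinates). -/
def sumFirst (n k : ℕ) (x : Fin n → ℝ) : ℝ :=
  ∑ i ∈ Finset.univ.filter (fun i : Fin n => (i : ℕ) < k), x i

/-- A `𝟙_S`-monotone path on `Π_{n−1}` starting at the identity permutation
`(1,2,…,n)`, for `S = {1,…,k}`: a sequence of vertices joined by edges along
which `𝟙_S` strictly increases, ending at a `𝟙_S`-maximizing vertex. -/
structure MonotonePathPerm (n k : ℕ) where
  M : ℕ
  σ : ℕ → (Fin n → ℝ)
  start : σ 0 = fun i : Fin n => ((i : ℕ) : ℝ) + 1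
  vert : ∀ h ≤ M, IsPermVertex n (σ h)
  edge : ∀ h < M, IsEdgeOf (Permutohedron n) (σ h) (σ (h + 1))
  inc : ∀ h < M, sumFirst n k (σ h) < sumFirst n k (σ (h + 1))
  max' : ∀ x : Fin n → ℝ, IsPermVertex n x → sumFirst n k x ≤ sumFirst n k (σ M)
  tail : ∀ h, M ≤ h → σ h = σ M

/-- A rectangular lattice permutation of size `k × m`: a sequence of `k·m`
values in `{0,…,k−1}` (representing `[k]`) in which each value occurs exactly
`m` times and, in every prefix, value `i` occurs at least as often as `i+1`. -/
structure LatticePerm (k m : ℕ) where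
  a : Fin (k * m) → Fin k
  count : ∀ j : Fin k,
    (Finset.univ.filter (fun t : Fin (k * m) => a t = j)).card = m
  prefix' : ∀ p : ℕ, ∀ i : ℕ, i + 1 < k →
    (Finset.univ.filter (fun t : Fin (k * m) => (t : ℕ) < p ∧ (a t : ℕ) = i + 1)).card ≤
    (Finset.univ.filter (fun t : Fin (k * m) => (t : ℕ) < p ∧ (a t : ℕ) = i)).card


open Finset

variable {n : ℕ}

/-- the vertex vector of a permutation -/
def pvec (σ : Equiv.Perm (Fin n)) : Fin n → ℝ := fun i => ((σ i : ℕ) : ℝ) + 1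

lemma pvec_apply (σ : Equiv.Perm (Fin n)) (i : Fin n) : pvec σ i = ((σ i : ℕ) : ℝ) + 1 := rfl

lemma pvec_injective : Function.Injective (pvec (n := n)) := by
  intro σ τ h
  ext i
  have := congrFun h i
  simp only [pvec, add_left_inj, Nat.cast_inj] at this
  exact congrArg Fin.val (Fin.val_injective this)

lemma pvec_lt_iff (σ : Equiv.Perm (Fin n)) (i j : Fin n) :
    pvec σ i < pvec σ j ↔ (σ i : ℕ) < (σ j : ℕ) := by
  simp [pvec]

lemma isPermVertex_iff (x : Fin n → ℝ) : IsPermVertex n x ↔ ∃ σ, x = pvec σ := by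
  constructor
  · rintro ⟨σ, h⟩; exact ⟨σ, funext h⟩
  · rintro ⟨σ, rfl⟩; exact ⟨σ, fun i => rfl⟩

lemma pvec_isPermVertex (σ : Equiv.Perm (Fin n)) : IsPermVertex n (pvec σ) :=
  ⟨σ, fun i => rfl⟩

lemma pvec_mem_permutohedron (σ : Equiv.Perm (Fin n)) : pvec σ ∈ Permutohedron n :=
  subset_convexHull ℝ _ (pvec_isPermVertex σ)

/-- dot product -/
def dotp (c x : Fin n → ℝ) : ℝ := ∑ i, c i * x i

lemma dotp_smul_add (c y z : Fin n → ℝ) (s t : ℝ) :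
    dotp c (s • y + t • z) = s * dotp c y + t * dotp c z := by
  simp only [dotp, Pi.add_apply, Pi.smul_apply, smul_eq_mul, mul_add, Finset.sum_add_distrib,
    Finset.mul_sum]
  congr 1 <;> exact Finset.sum_congr rfl (fun i _ => by ring)

/-- the count lemma: the number of positions with smaller value equals the value -/
lemma card_filter_lt (σ : Equiv.Perm (Fin n)) (i : Fin n) :
    (univ.filter (fun j => σ j < σ i)).card = (σ i : ℕ) := by
  have h1 : (univ.filter (fun j => σ j < σ i)).card = (univ.filter (fun w : Fin n => w < σ i)).card := by
    apply Finset.card_bij (fun j _ => σ j)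
    · intro a ha; simp only [mem_filter, mem_univ, true_and] at ha ⊢; exact ha
    · intro a ha b hb hab; exact σ.injective hab
    · intro w hw; simp only [mem_filter, mem_univ, true_and] at hw ⊢
      exact ⟨σ.symm w, by simpa using hw, by simp⟩
  rw [h1]
  have : univ.filter (fun w : Fin n => w < σ i) = Finset.Iio (σ i) := by ext j; simp
  rw [this, Fin.card_Iio]

/-- two permutations with pointwise `≤` values are equal -/
lemma perm_eq_of_le (σ τ : Equiv.Perm (Fin n)) (h : ∀ i, (σ i : ℕ) ≤ (τ i : ℕ)) :
    σ = τ := by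
  have hsum : ∑ i, ((σ i : ℕ)) = ∑ i, ((τ i : ℕ)) := by
    rw [Equiv.sum_comp σ (fun w : Fin n => (w : ℕ)), Equiv.sum_comp τ (fun w : Fin n => (w : ℕ))]
  have := (Finset.sum_eq_sum_iff_of_le (fun i _ => h i)).mp hsum
  ext i
  exact congrArg Fin.val (Fin.val_injective (this i (mem_univ i)))

/-- effect of a swap on the dot product -/
lemma dotp_swap (c : Fin n → ℝ) (σ : Equiv.Perm (Fin n)) (a b : Fin n) (hab : a ≠ b) :
    dotp c (pvec (σ * Equiv.swap a b)) =
      dotp c (pvec σ) + (c a - c b) * (pvec σ b - pvec σ a) := by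
  have hv : ∀ i, pvec (σ * Equiv.swap a b) i = pvec σ (Equiv.swap a b i) := fun i => rfl
  have key : ∀ i, c i * pvec (σ * Equiv.swap a b) i - c i * pvec σ i =
      (if i = a then c a * (pvec σ b - pvec σ a) else if i = b then c b * (pvec σ a - pvec σ b) else 0) := by
    intro i
    rcases eq_or_ne i a with rfl | ha
    · simp [hv, Equiv.swap_apply_left]; ring
    rcases eq_or_ne i b with rfl | hb
    · simp [hv, Equiv.swap_apply_right, ha]; ring
    · simp [hv, Equiv.swap_apply_of_ne_of_ne ha hb, ha, hb]
  have : dotp c (pvec (σ * Equiv.swap a b)) - dotp c (pvec σ) =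
      ∑ i, (if i = a then c a * (pvec σ b - pvec σ a) else if i = b then c b * (pvec σ a - pvec σ b) else 0) := by
    rw [dotp, dotp, ← Finset.sum_sub_distrib]
    exact Finset.sum_congr rfl (fun i _ => key i)
  have hsum : ∑ i, (if i = a then c a * (pvec σ b - pvec σ a) else if i = b then c b * (pvec σ a - pvec σ b) else 0) = c a * (pvec σ b - pvec σ a) + c b * (pvec σ a - pvec σ b) := by
    rw [← Finset.sum_subset (Finset.subset_univ ({a, b} : Finset (Fin n)))]
    · rw [Finset.sum_pair hab]
      simp [hab, hab.symm]
    · intro i _ hi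
      simp only [Finset.mem_insert, Finset.mem_singleton, not_or] at hi
      simp [hi.1, hi.2]
  rw [hsum] at this
  linarith [this]


lemma monovary_of_max (c : Fin n → ℝ) (α : Equiv.Perm (Fin n))
    (hmax : ∀ x : Equiv.Perm (Fin n), dotp c (pvec x) ≤ dotp c (pvec α)) :
    Monovary c (pvec α) := by
  intro i j hij
  have hne : i ≠ j := by rintro rfl; exact lt_irrefl _ hij
  have h := hmax (α * Equiv.swap i j)
  rw [dotp_swap c α i j hne] at h
  nlinarith [h, hij]

lemma strict_max_self (γ x : Equiv.Perm (Fin n)) (hne : x ≠ γ) :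
    dotp (pvec γ) (pvec x) < dotp (pvec γ) (pvec γ) := by
  set τ := γ⁻¹ * x with hτ
  have hx : ∀ i, pvec x i = pvec γ (τ i) := by
    intro i; simp [pvec, hτ, Equiv.Perm.mul_apply]
  have hτne : τ ≠ 1 := by
    intro h1
    exact hne ((inv_mul_eq_one.mp h1).symm)
  have hmono : Monovary (pvec γ) (pvec γ) := fun i j h => le_of_lt h
  have hkey : ¬ Monovary (pvec γ) (pvec γ ∘ τ) := by
    intro hM
    have hle : ∀ i, ((γ (τ i) : ℕ)) ≤ (γ i : ℕ) := by
      intro i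
      have hsub : (univ.filter (fun j => (γ * τ) j < (γ * τ) i)) ⊆
          (univ.filter (fun j => γ j < γ i)) := by
        intro j hj
        rw [Finset.mem_filter] at hj ⊢
        simp only [mem_filter, mem_univ, true_and, Equiv.Perm.mul_apply] at hj ⊢
        have hji : j ≠ i := by rintro rfl; exact lt_irrefl _ hj
        have h1 : pvec γ (τ j) < pvec γ (τ i) := by
          simp only [pvec]
          exact_mod_cast (by exact_mod_cast Nat.add_lt_add_right (by exact_mod_cast hj) 1 : ((γ (τ j) : ℕ) : ℝ) + 1 < ((γ (τ i) : ℕ) : ℝ) + 1)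
        have h2 : pvec γ j ≤ pvec γ i := hM h1
        have h3 : (γ j : ℕ) ≤ (γ i : ℕ) := by
          simp only [pvec] at h2
          have : ((γ j : ℕ) : ℝ) ≤ ((γ i : ℕ) : ℝ) := by linarith
          exact_mod_cast this
        have h4 : γ j ≠ γ i := fun h => hji (γ.injective h)
        have h5 : (γ j : ℕ) ≠ (γ i : ℕ) := fun h => h4 (Fin.val_injective h)
        exact Fin.lt_def.mpr (lt_of_le_of_ne h3 h5)
      have := Finset.card_le_card hsub
      rwa [card_filter_lt (γ * τ) i, card_filter_lt γ i] at this
    have : γ * τ = γ := perm_eq_of_le _ _ hle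
    exact hτne (mul_left_cancel (a := γ) (by rw [this, mul_one]))
  have := (hmono.sum_mul_comp_perm_lt_sum_mul_iff (σ := τ)).mpr hkey
  calc dotp (pvec γ) (pvec x) = ∑ i, pvec γ i * pvec γ (τ i) := by
        unfold dotp; exact Finset.sum_congr rfl (fun i _ => by rw [hx i])
    _ < ∑ i, pvec γ i * pvec γ i := this
    _ = dotp (pvec γ) (pvec γ) := rfl

lemma mem_segment_perm (α ξ γ : Equiv.Perm (Fin n))
    (h : pvec γ ∈ segment ℝ (pvec α) (pvec ξ)) : γ = α ∨ γ = ξ := by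
  by_contra hc
  push_neg at hc
  obtain ⟨s, t, hs, ht, hst, heq⟩ := h
  have hA := strict_max_self γ α hc.1.symm
  have hB := strict_max_self γ ξ hc.2.symm
  have hD : dotp (pvec γ) (pvec γ) = s * dotp (pvec γ) (pvec α) + t * dotp (pvec γ) (pvec ξ) := by
    rw [← heq, dotp_smul_add]
  set D := dotp (pvec γ) (pvec γ)
  set A := dotp (pvec γ) (pvec α)
  set B := dotp (pvec γ) (pvec ξ)
  have h1 : 0 ≤ s * (D - A) := mul_nonneg hs (by linarith)
  have h2 : 0 ≤ t * (D - B) := mul_nonneg ht (by linarith)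
  have h3 : s * (D - A) + t * (D - B) = 0 := by
    have : s * D + t * D = D := by rw [← add_mul, hst, one_mul]
    nlinarith [hD, this]
  have hs0 : s * (D - A) = 0 := by linarith
  have ht0 : t * (D - B) = 0 := by linarith
  rcases mul_eq_zero.mp hs0 with h | h
  · rcases mul_eq_zero.mp ht0 with h' | h'
    · linarith
    · linarith
  · linarith


/-- vertex set as a Finset -/
noncomputable def VS (n : ℕ) : Finset (Fin n → ℝ) := Finset.univ.image pvec

lemma vertexSet_eq (n : ℕ) : {x | IsPermVertex n x} = (VS n : Set (Fin n → ℝ)) := by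
  ext x
  simp only [Set.mem_setOf_eq, isPermVertex_iff, VS, coe_image, coe_univ, Set.image_univ,
    Set.mem_range]
  exact ⟨fun ⟨σ, h⟩ => ⟨σ, h.symm⟩, fun ⟨σ, h⟩ => ⟨σ, h.symm⟩⟩

lemma permutohedron_eq (n : ℕ) : Permutohedron n = convexHull ℝ (VS n : Set (Fin n → ℝ)) := by
  rw [Permutohedron, vertexSet_eq]

lemma dotp_isLinear (c : Fin n → ℝ) : IsLinearMap ℝ (dotp c) := by
  constructor
  · intro y z
    simp only [dotp, Pi.add_apply, mul_add]
    exact Finset.sum_add_distrib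
  · intro s y
    simp only [dotp, Pi.smul_apply, smul_eq_mul, Finset.mul_sum]
    exact Finset.sum_congr rfl (fun i _ => by ring)

lemma dotp_le_of_mem (c : Fin n → ℝ) (B : ℝ)
    (hB : ∀ x : Equiv.Perm (Fin n), dotp c (pvec x) ≤ B)
    {y : Fin n → ℝ} (hy : y ∈ Permutohedron n) : dotp c y ≤ B := by
  rw [Permutohedron] at hy
  have : convexHull ℝ {x | IsPermVertex n x} ⊆ {y | dotp c y ≤ B} := by
    apply convexHull_min
    · rintro x ⟨σ, hσ⟩
      have : x = pvec σ := funext hσ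
      simp only [Set.mem_setOf_eq, this]
      exact hB σ
    · exact convex_halfSpace_le (dotp_isLinear c) B
  exact this hy

/-- The maximality face over the permutohedron is the segment between the two
maximizing vertices. -/
lemma face_eq_segment (c : Fin n → ℝ) (α β : Equiv.Perm (Fin n))
    (hmax : ∀ x : Equiv.Perm (Fin n), dotp c (pvec x) ≤ dotp c (pvec α))
    (hβ : dotp c (pvec β) = dotp c (pvec α))
    (hext : ∀ x : Equiv.Perm (Fin n), dotp c (pvec x) = dotp c (pvec α) → x = α ∨ x = β) :
    {x | x ∈ Permutohedron n ∧ ∀ y ∈ Permutohedron n,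
        ∑ i, c i * y i ≤ ∑ i, c i * x i} = segment ℝ (pvec α) (pvec β) := by
  have hdot : ∀ x : Fin n → ℝ, (∑ i, c i * x i) = dotp c x := fun _ => rfl
  apply Set.Subset.antisymm
  · rintro x ⟨hxP, hxmax⟩
    have hxB : dotp c x ≤ dotp c (pvec α) := dotp_le_of_mem c _ hmax hxP
    have hxeq : dotp c x = dotp c (pvec α) := by
      have := hxmax (pvec α) (pvec_mem_permutohedron α)
      rw [hdot, hdot] at this
      linarith
    -- express x as a convex combination of vertices
    rw [permutohedron_eq] at hxP
    rw [Finset.mem_convexHull'] at hxP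
    obtain ⟨w, hw0, hw1, hwx⟩ := hxP
    -- weights vanish on non-maximizers
    have hvanish : ∀ y ∈ VS n, dotp c y < dotp c (pvec α) → w y = 0 := by
      intro y hy hylt
      by_contra h0
      have hypos : 0 < w y := lt_of_le_of_ne (hw0 y hy) (Ne.symm h0)
      have hlt : ∑ z ∈ VS n, w z * dotp c z < ∑ z ∈ VS n, w z * dotp c (pvec α) := by
        apply Finset.sum_lt_sum
        · intro z hz
          have : dotp c z ≤ dotp c (pvec α) := by
            obtain ⟨σ, _, rfl⟩ := Finset.mem_image.mp hz
            exact hmax σ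
          exact mul_le_mul_of_nonneg_left this (hw0 z hz)
        · exact ⟨y, hy, by nlinarith [hylt, hypos]⟩
      have hsum : ∑ z ∈ VS n, w z * dotp c z = dotp c x := by
        rw [← hwx]
        unfold dotp
        calc ∑ z ∈ VS n, w z * ∑ i, c i * z i
            = ∑ z ∈ VS n, ∑ i, w z * (c i * z i) := by
              exact Finset.sum_congr rfl (fun z _ => Finset.mul_sum _ _ _)
          _ = ∑ i, ∑ z ∈ VS n, w z * (c i * z i) := Finset.sum_comm
          _ = ∑ i, c i * (∑ z ∈ VS n, w z • z) i := by
              apply Finset.sum_congr rfl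
              intro i _
              simp only [Finset.sum_apply, Pi.smul_apply, smul_eq_mul, Finset.mul_sum]
              exact Finset.sum_congr rfl (fun z _ => by ring)
      have hsum2 : ∑ z ∈ VS n, w z * dotp c (pvec α) = dotp c (pvec α) := by
        rw [← Finset.sum_mul, hw1, one_mul]
      rw [hsum, hsum2, hxeq] at hlt
      exact lt_irrefl _ hlt
    have hsupp : ∀ z ∈ VS n, z ∉ ({pvec α, pvec β} : Finset (Fin n → ℝ)) → w z = 0 := by
      intro z hz hzn
      obtain ⟨σ, _, rfl⟩ := Finset.mem_image.mp hz
      rcases lt_or_eq_of_le (hmax σ) with hlt | heq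
      · exact hvanish _ hz hlt
      · rcases hext σ heq with rfl | rfl
        · exact absurd (by simp) hzn
        · exact absurd (by simp) hzn
    have hsub : ({pvec α, pvec β} : Finset (Fin n → ℝ)) ⊆ VS n := by
      intro z hz
      simp only [Finset.mem_insert, Finset.mem_singleton] at hz
      rcases hz with rfl | rfl <;> exact Finset.mem_image_of_mem _ (mem_univ _)
    have hx2 : ∑ z ∈ ({pvec α, pvec β} : Finset (Fin n → ℝ)), w z • z = x := by
      rw [← hwx]
      exact Finset.sum_subset hsub (fun z hz hzn => by rw [hsupp z hz hzn, zero_smul])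
    have hw2 : ∑ z ∈ ({pvec α, pvec β} : Finset (Fin n → ℝ)), w z = 1 := by
      rw [← hw1]
      exact Finset.sum_subset hsub (fun z hz hzn => hsupp z hz hzn)
    by_cases hαβ : pvec α = pvec β
    · have hpair : ({pvec α, pvec β} : Finset (Fin n → ℝ)) = {pvec α} := by
        rw [← hαβ]; simp
      rw [hpair, Finset.sum_singleton] at hx2 hw2
      have : x = pvec α := by rw [← hx2, hw2, one_smul]
      rw [this]
      exact left_mem_segment ℝ _ _
    · rw [Finset.sum_pair hαβ] at hx2 hw2
      exact ⟨w (pvec α), w (pvec β), hw0 _ (hsub (by simp)), hw0 _ (hsub (by simp)), hw2, hx2⟩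
  · rintro x ⟨s, t, hs, ht, hst, rfl⟩
    constructor
    · rw [permutohedron_eq]
      exact (convex_convexHull ℝ _).segment_subset
        (by rw [← permutohedron_eq]; exact pvec_mem_permutohedron α)
        (by rw [← permutohedron_eq]; exact pvec_mem_permutohedron β)
        ⟨s, t, hs, ht, hst, rfl⟩
    · intro y hyP
      rw [hdot, hdot, dotp_smul_add, hβ, ← add_mul, hst, one_mul]
      exact dotp_le_of_mem c _ hmax hyP


lemma max_of_monovary (c : Fin n → ℝ) (α : Equiv.Perm (Fin n)) (hm : Monovary c (pvec α)) :
    ∀ x : Equiv.Perm (Fin n), dotp c (pvec x) ≤ dotp c (pvec α) := by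
  intro x
  have hx : ∀ i, pvec x i = pvec α ((α⁻¹ * x) i) := by
    intro i; simp [pvec, Equiv.Perm.mul_apply]
  calc dotp c (pvec x) = ∑ i, c i * pvec α ((α⁻¹ * x) i) :=
        Finset.sum_congr rfl (fun i _ => by rw [hx i])
    _ ≤ ∑ i, c i * pvec α i := hm.sum_mul_comp_perm_le_sum_mul
    _ = dotp c (pvec α) := rfl

lemma monovary_of_dotp_eq (c : Fin n → ℝ) (α : Equiv.Perm (Fin n)) (hm : Monovary c (pvec α))
    (x : Equiv.Perm (Fin n)) (heq : dotp c (pvec x) = dotp c (pvec α)) :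
    Monovary c (pvec x) := by
  have hx : ∀ i, pvec x i = pvec α ((α⁻¹ * x) i) := by
    intro i; simp [pvec, Equiv.Perm.mul_apply]
  have h1 : ∑ i, c i * pvec α ((α⁻¹ * x) i) = ∑ i, c i * pvec α i := by
    calc ∑ i, c i * pvec α ((α⁻¹ * x) i) = dotp c (pvec x) :=
          (Finset.sum_congr rfl (fun i _ => by rw [hx i])).symm
      _ = dotp c (pvec α) := heq
      _ = ∑ i, c i * pvec α i := rfl
  have := (hm.sum_mul_comp_perm_eq_sum_mul_iff (σ := α⁻¹ * x)).mp h1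
  have hfun : pvec α ∘ (α⁻¹ * x) = pvec x := funext fun i => (hx i).symm
  rwa [hfun] at this

section EdgeBuild

variable (α : Equiv.Perm (Fin n)) (a b : Fin n)

lemma perm_val_ne (i j : Fin n) (hij : i ≠ j) : (α i : ℕ) ≠ (α j : ℕ) := by
  intro h
  exact hij (α.injective (Fin.val_injective h))

/-- the edge functional -/
noncomputable def edgeFn : Fin n → ℝ := fun i => pvec α i + pvec (α * Equiv.swap a b) i

lemma edgeFn_a : edgeFn α a b a = (((α a : ℕ) + (α b : ℕ) + 2 : ℕ) : ℝ) := by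
  rw [edgeFn, pvec_apply, pvec_apply]
  simp only [Equiv.Perm.mul_apply, Equiv.swap_apply_left]
  push_cast; ring

lemma edgeFn_b : edgeFn α a b b = (((α a : ℕ) + (α b : ℕ) + 2 : ℕ) : ℝ) := by
  rw [edgeFn, pvec_apply, pvec_apply]
  simp only [Equiv.Perm.mul_apply, Equiv.swap_apply_right]
  push_cast; ring

lemma edgeFn_off (i : Fin n) (hia : i ≠ a) (hib : i ≠ b) :
    edgeFn α a b i = ((2 * (α i : ℕ) + 2 : ℕ) : ℝ) := by
  rw [edgeFn, pvec_apply, pvec_apply]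
  simp only [Equiv.Perm.mul_apply, Equiv.swap_apply_of_ne_of_ne hia hib]
  push_cast; ring

lemma edgeFn_monovary (hab : a ≠ b) (hval : (α b : ℕ) = (α a : ℕ) + 1) :
    Monovary (edgeFn α a b) (pvec α) := by
  intro i j hij
  rw [pvec_lt_iff] at hij
  have hijne : i ≠ j := fun h => lt_irrefl _ (h ▸ hij)
  by_cases hia : i = a
  · by_cases hjb : j = b
    · rw [hia, hjb, edgeFn_a, edgeFn_b]
    · have hja : j ≠ a := fun h => hijne (hia.trans h.symm)
      rw [hia, edgeFn_a, edgeFn_off α a b j hja hjb, Nat.cast_le]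
      have h1 : (α a : ℕ) < (α j : ℕ) := hia ▸ hij
      have h2 : (α j : ℕ) ≠ (α b : ℕ) := perm_val_ne α j b hjb
      omega
  · by_cases hib : i = b
    · by_cases hja : j = a
      · exfalso
        have : (α b : ℕ) < (α a : ℕ) := by rw [← hib, ← hja]; exact hij
        omega
      · by_cases hjb : j = b
        · exact absurd (hib.trans hjb.symm) hijne
        · rw [hib, edgeFn_b, edgeFn_off α a b j hja hjb, Nat.cast_le]
          have h1 : (α b : ℕ) < (α j : ℕ) := hib ▸ hij
          omega
    · by_cases hja : j = a
      · rw [hja, edgeFn_off α a b i hia hib, edgeFn_a, Nat.cast_le]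
        have h1 : (α i : ℕ) < (α a : ℕ) := hja ▸ hij
        omega
      · by_cases hjb : j = b
        · rw [hjb, edgeFn_off α a b i hia hib, edgeFn_b, Nat.cast_le]
          have h1 : (α i : ℕ) < (α b : ℕ) := hjb ▸ hij
          have h2 : (α i : ℕ) ≠ (α a : ℕ) := perm_val_ne α i a hia
          omega
        · rw [edgeFn_off α a b i hia hib, edgeFn_off α a b j hja hjb, Nat.cast_le]
          omega

lemma edgeFn_dotp_eq (hab : a ≠ b) :
    dotp (edgeFn α a b) (pvec (α * Equiv.swap a b)) = dotp (edgeFn α a b) (pvec α) := by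
  rw [dotp_swap _ α a b hab]
  rw [edgeFn_a, edgeFn_b]
  ring

lemma perm_val_eq_of_lt_iff (x γ : Equiv.Perm (Fin n)) (i : Fin n)
    (h : ∀ j, j ≠ i → ((x j : ℕ) < (x i : ℕ) ↔ (γ j : ℕ) < (γ i : ℕ))) :
    x i = γ i := by
  have hxf : (univ.filter (fun j => x j < x i)) = (univ.filter (fun j => γ j < γ i)) := by
    ext j
    simp only [mem_filter, mem_univ, true_and]
    rcases eq_or_ne j i with rfl | hji
    · simp
    · rw [Fin.lt_def, Fin.lt_def]
      exact h j hji
  have h1 := card_filter_lt x i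
  have h2 := card_filter_lt γ i
  rw [hxf, h2] at h1
  exact Fin.val_injective h1.symm

lemma edgeFn_eq_case (hab : a ≠ b) (hval : (α b : ℕ) = (α a : ℕ) + 1)
    (x : Equiv.Perm (Fin n)) (hMx : Monovary (edgeFn α a b) (pvec x)) :
    x = α ∨ x = α * Equiv.swap a b := by
  have hMα : Monovary (edgeFn α a b) (pvec α) := edgeFn_monovary α a b hab hval
  -- distinctness of the functional off the tied pair
  have hcne : ∀ i j : Fin n, i ≠ j → ¬(i = a ∧ j = b) → ¬(i = b ∧ j = a) →
      edgeFn α a b i ≠ edgeFn α a b j := by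
    intro i j hij h1 h2 hceq
    by_cases hia : i = a
    · by_cases hjb : j = b
      · exact h1 ⟨hia, hjb⟩
      · have hja : j ≠ a := fun h => hij (hia.trans h.symm)
        rw [hia, edgeFn_a, edgeFn_off α a b j hja hjb, Nat.cast_inj] at hceq
        omega
    · by_cases hib : i = b
      · by_cases hja : j = a
        · exact h2 ⟨hib, hja⟩
        · by_cases hjb : j = b
          · exact hij (hib.trans hjb.symm)
          · rw [hib, edgeFn_b, edgeFn_off α a b j hja hjb, Nat.cast_inj] at hceq
            omega
      · by_cases hja : j = a
        · rw [hja, edgeFn_off α a b i hia hib, edgeFn_a, Nat.cast_inj] at hceq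
          omega
        · by_cases hjb : j = b
          · rw [hjb, edgeFn_off α a b i hia hib, edgeFn_b, Nat.cast_inj] at hceq
            omega
          · rw [edgeFn_off α a b i hia hib, edgeFn_off α a b j hja hjb, Nat.cast_inj] at hceq
            exact perm_val_ne α i j hij (by omega)
  -- order comparison transfer
  have hkey : ∀ i : Fin n, i ≠ a → i ≠ b → ∀ j, j ≠ i →
      ((x j : ℕ) < (x i : ℕ) ↔ (α j : ℕ) < (α i : ℕ)) := by
    intro i hia hib j hji
    have hcij : edgeFn α a b j ≠ edgeFn α a b i := by
      apply hcne j i hji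
      · rintro ⟨_, rfl⟩; exact hib rfl
      · rintro ⟨_, rfl⟩; exact hia rfl
    constructor
    · intro hlt
      have h1 : edgeFn α a b j ≤ edgeFn α a b i := hMx ((pvec_lt_iff x j i).mpr hlt)
      have h2 : edgeFn α a b j < edgeFn α a b i := lt_of_le_of_ne h1 hcij
      by_contra hgt
      push_neg at hgt
      have h3 : (α i : ℕ) < (α j : ℕ) :=
        lt_of_le_of_ne hgt (perm_val_ne α i j (Ne.symm hji))
      have := hMα ((pvec_lt_iff α i j).mpr h3)
      linarith
    · intro hlt
      have h1 : edgeFn α a b j ≤ edgeFn α a b i := hMα ((pvec_lt_iff α j i).mpr hlt)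
      have h2 : edgeFn α a b j < edgeFn α a b i := lt_of_le_of_ne h1 hcij
      by_contra hgt
      push_neg at hgt
      have h3 : (x i : ℕ) < (x j : ℕ) :=
        lt_of_le_of_ne hgt (perm_val_ne x i j (Ne.symm hji))
      have := hMx ((pvec_lt_iff x i j).mpr h3)
      linarith
  have hoff : ∀ i : Fin n, i ≠ a → i ≠ b → x i = α i := by
    intro i hia hib
    exact perm_val_eq_of_lt_iff x α i (hkey i hia hib)
  -- the values at a and b
  have hxval : ∀ p : Fin n, x p = α a ∨ x p = α b ∨ (α.symm (x p) ≠ a ∧ α.symm (x p) ≠ b) := by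
    intro p
    have hαd : α (α.symm (x p)) = x p := α.apply_symm_apply (x p)
    rcases eq_or_ne (α.symm (x p)) a with hda | hda
    · left; rw [← hαd, hda]
    rcases eq_or_ne (α.symm (x p)) b with hdb | hdb
    · right; left; rw [← hαd, hdb]
    · right; right; exact ⟨hda, hdb⟩
  have hxa : x a = α a ∨ x a = α b := by
    rcases hxval a with h | h | ⟨hda, hdb⟩
    · left; exact h
    · right; exact h
    · exfalso
      have hαd : α (α.symm (x a)) = x a := α.apply_symm_apply (x a)
      have h5 : x (α.symm (x a)) = α (α.symm (x a)) := hoff _ hda hdb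
      rw [hαd] at h5
      have h6 : α.symm (x a) = a := x.injective h5
      exact hda h6
  have hxb : x b = α a ∨ x b = α b := by
    rcases hxval b with h | h | ⟨hda, hdb⟩
    · left; exact h
    · right; exact h
    · exfalso
      have hαd : α (α.symm (x b)) = x b := α.apply_symm_apply (x b)
      have h5 : x (α.symm (x b)) = α (α.symm (x b)) := hoff _ hda hdb
      rw [hαd] at h5
      have h6 : α.symm (x b) = b := x.injective h5
      exact hdb h6
  have hxab : x a ≠ x b := fun h => hab (x.injective h)
  rcases hxa with h1 | h1
  · left
    ext i
    by_cases hia : i = a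
    · rw [hia, h1]
    · by_cases hib : i = b
      · rcases hxb with h2 | h2
        · exact absurd ((h2.trans h1.symm).symm) hxab
        · rw [hib, h2]
      · rw [hoff i hia hib]
  · right
    ext i
    by_cases hia : i = a
    · rw [hia, h1]
      simp [Equiv.Perm.mul_apply, Equiv.swap_apply_left]
    · by_cases hib : i = b
      · rcases hxb with h2 | h2
        · rw [hib, h2]
          simp [Equiv.Perm.mul_apply, Equiv.swap_apply_right]
        · exact absurd (h1.trans h2.symm) hxab
      · rw [hoff i hia hib]
        simp [Equiv.Perm.mul_apply, Equiv.swap_apply_of_ne_of_ne hia hib]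

lemma edge_build (hab : a ≠ b) (hval : (α b : ℕ) = (α a : ℕ) + 1) :
    IsEdgeOf (Permutohedron n) (pvec α) (pvec (α * Equiv.swap a b)) := by
  constructor
  · intro h
    have h1 : α = α * Equiv.swap a b := pvec_injective h
    have h2 : α a = α b := by
      conv_lhs => rw [h1]
      simp [Equiv.Perm.mul_apply, Equiv.swap_apply_left]
    exact hab (α.injective h2)
  · refine ⟨edgeFn α a b, ?_⟩
    apply face_eq_segment (edgeFn α a b) α (α * Equiv.swap a b)
    · exact max_of_monovary _ _ (edgeFn_monovary α a b hab hval)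
    · exact edgeFn_dotp_eq α a b hab
    · intro x hx
      exact edgeFn_eq_case α a b hab hval x
        (monovary_of_dotp_eq _ _ (edgeFn_monovary α a b hab hval) x hx)

end EdgeBuild


lemma swap_ne_self (α : Equiv.Perm (Fin n)) (a b : Fin n) (hab : a ≠ b) :
    α * Equiv.swap a b ≠ α := by
  intro h
  have := congrArg (fun τ : Equiv.Perm (Fin n) => τ a) h
  simp only [Equiv.Perm.mul_apply, Equiv.swap_apply_left] at this
  exact hab (α.injective this).symm

lemma edge_char (α ξ : Equiv.Perm (Fin n))
    (hedge : IsEdgeOf (Permutohedron n) (pvec α) (pvec ξ)) :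
    ∃ a b : Fin n, a ≠ b ∧ ξ = α * Equiv.swap a b ∧ (α b : ℕ) = (α a : ℕ) + 1 := by
  obtain ⟨hne, c, hface⟩ := hedge
  have hαξ : α ≠ ξ := fun h => hne (congrArg pvec h)
  have huf : pvec α ∈ {x | x ∈ Permutohedron n ∧ ∀ y ∈ Permutohedron n,
      ∑ i, c i * y i ≤ ∑ i, c i * x i} := by
    rw [hface]; exact left_mem_segment ℝ _ _
  have hvf : pvec ξ ∈ {x | x ∈ Permutohedron n ∧ ∀ y ∈ Permutohedron n,
      ∑ i, c i * y i ≤ ∑ i, c i * x i} := by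
    rw [hface]; exact right_mem_segment ℝ _ _
  have hmaxα : ∀ x : Equiv.Perm (Fin n), dotp c (pvec x) ≤ dotp c (pvec α) :=
    fun x => huf.2 (pvec x) (pvec_mem_permutohedron x)
  have hmaxξ : ∀ x : Equiv.Perm (Fin n), dotp c (pvec x) ≤ dotp c (pvec ξ) :=
    fun x => hvf.2 (pvec x) (pvec_mem_permutohedron x)
  have hMα : Monovary c (pvec α) := monovary_of_max c α hmaxα
  have hMξ : Monovary c (pvec ξ) := monovary_of_max c ξ hmaxξ
  have hdotξ : dotp c (pvec ξ) = dotp c (pvec α) := le_antisymm (hmaxα ξ) (hmaxξ α)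
  -- every maximizer is α or ξ
  have hmem : ∀ x : Equiv.Perm (Fin n), dotp c (pvec x) = dotp c (pvec α) → x = α ∨ x = ξ := by
    intro x hx
    have hxf : pvec x ∈ {x | x ∈ Permutohedron n ∧ ∀ y ∈ Permutohedron n,
        ∑ i, c i * y i ≤ ∑ i, c i * x i} := by
      refine ⟨pvec_mem_permutohedron x, fun y hy => ?_⟩
      have h1 : dotp c y ≤ dotp c (pvec α) := dotp_le_of_mem c _ hmaxα hy
      show dotp c y ≤ dotp c (pvec x)
      rw [hx]; exact h1
    rw [hface] at hxf
    exact mem_segment_perm α ξ x hxf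
  -- lt transfer under a monovarying permutation when c is injective at the pair
  have ltiff : ∀ γ : Equiv.Perm (Fin n), Monovary c (pvec γ) → ∀ i j : Fin n, j ≠ i →
      c j ≠ c i → ((γ j : ℕ) < (γ i : ℕ) ↔ c j < c i) := by
    intro γ hMγ i j hji hcji
    constructor
    · intro h
      exact lt_of_le_of_ne (hMγ ((pvec_lt_iff γ j i).mpr h)) hcji
    · intro h
      by_contra hge
      push_neg at hge
      have h2 : (γ i : ℕ) < (γ j : ℕ) := lt_of_le_of_ne hge (perm_val_ne γ i j (Ne.symm hji))
      have := hMγ ((pvec_lt_iff γ i j).mpr h2)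
      linarith
  -- there is a tie
  have htie : ∃ a b : Fin n, a ≠ b ∧ c a = c b := by
    by_contra h
    push_neg at h
    apply hαξ
    ext i
    have h1 : ξ i = α i := by
      apply perm_val_eq_of_lt_iff ξ α i
      intro j hji
      have hcji : c j ≠ c i := h j i hji
      rw [ltiff ξ hMξ i j hji hcji, ltiff α hMα i j hji hcji]
    exact congrArg Fin.val h1.symm
  obtain ⟨a, b, hab, hcab⟩ := htie
  -- the swap of any tie equals ξ
  have hswap : ∀ a' b' : Fin n, a' ≠ b' → c a' = c b' → α * Equiv.swap a' b' = ξ := by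
    intro a' b' hab' hcab'
    have hdot : dotp c (pvec (α * Equiv.swap a' b')) = dotp c (pvec α) := by
      rw [dotp_swap c α a' b' hab', hcab']
      ring
    rcases hmem _ hdot with h | h
    · exact absurd h (swap_ne_self α a' b' hab')
    · exact h
  have hξab : ξ = α * Equiv.swap a b := (hswap a b hab hcab).symm
  have hvne : (α a : ℕ) ≠ (α b : ℕ) := perm_val_ne α a b hab
  rcases lt_or_gt_of_ne hvne with hlt | hgt
  · -- α a < α b ; show consecutive
    refine ⟨a, b, hab, hξab, ?_⟩
    by_contra hcons
    have hbetween : (α a : ℕ) + 1 < (α b : ℕ) := by omega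
    have hb1 : (α a : ℕ) + 1 < n := lt_trans hbetween (α b).isLt
    set w : Fin n := ⟨(α a : ℕ) + 1, hb1⟩ with hw
    set d : Fin n := α.symm w with hdd
    have hαd : α d = w := α.apply_symm_apply w
    have hdval : (α d : ℕ) = (α a : ℕ) + 1 := by rw [hαd]
    have hda : d ≠ a := fun h => by
      rw [h] at hdval; omega
    have hdb : d ≠ b := fun h => by
      rw [h] at hdval; omega
    have hcad : c a = c d := by
      have h1 : c a ≤ c d := hMα ((pvec_lt_iff α a d).mpr (by omega))
      have h2 : c d ≤ c b := hMα ((pvec_lt_iff α d b).mpr (by omega))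
      rw [← hcab] at h2
      linarith
    have h3 : α * Equiv.swap a d = ξ := hswap a d (Ne.symm hda) hcad
    rw [hξab] at h3
    have h4 : Equiv.swap a d = Equiv.swap a b := mul_left_cancel h3
    have h5 := congrArg (fun τ : Equiv.Perm (Fin n) => τ d) h4
    simp only [Equiv.swap_apply_right] at h5
    rw [Equiv.swap_apply_of_ne_of_ne hda hdb] at h5
    exact hda h5.symm
  · -- α b < α a
    refine ⟨b, a, hab.symm, by rw [Equiv.swap_comm] at hξab; exact hξab, ?_⟩
    by_contra hcons
    have hbetween : (α b : ℕ) + 1 < (α a : ℕ) := by omega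
    have hb1 : (α b : ℕ) + 1 < n := lt_trans hbetween (α a).isLt
    set w : Fin n := ⟨(α b : ℕ) + 1, hb1⟩ with hw
    set d : Fin n := α.symm w with hdd
    have hαd : α d = w := α.apply_symm_apply w
    have hdval : (α d : ℕ) = (α b : ℕ) + 1 := by rw [hαd]
    have hda : d ≠ a := fun h => by
      rw [h] at hdval; omega
    have hdb : d ≠ b := fun h => by
      rw [h] at hdval; omega
    have hcbd : c b = c d := by
      have h1 : c b ≤ c d := hMα ((pvec_lt_iff α b d).mpr (by omega))
      have h2 : c d ≤ c a := hMα ((pvec_lt_iff α d a).mpr (by omega))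
      rw [hcab] at h2
      linarith
    have h3 : α * Equiv.swap b d = ξ := hswap b d (Ne.symm hdb) hcbd
    rw [hξab] at h3
    have h4 : Equiv.swap b d = Equiv.swap a b := mul_left_cancel h3
    have h5 := congrArg (fun τ : Equiv.Perm (Fin n) => τ d) h4
    simp only [Equiv.swap_apply_right] at h5
    rw [Equiv.swap_apply_of_ne_of_ne hda hdb] at h5
    exact hdb h5.symm


section SumFirst

variable (k : ℕ)

/-- first block -/
def blk (n k : ℕ) : Finset (Fin n) := univ.filter (fun i : Fin n => (i : ℕ) < k)

lemma mem_blk {n k : ℕ} {i : Fin n} : i ∈ blk n k ↔ (i : ℕ) < k := by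
  simp [blk]

lemma sumFirst_eq_blk (n k : ℕ) (x : Fin n → ℝ) : sumFirst n k x = ∑ i ∈ blk n k, x i := rfl

lemma sum_blk {n : ℕ} {M : Type*} [AddCommMonoid M] (hk : k ≤ n) (g : ℕ → M) :
    ∑ i ∈ blk n k, g (i : ℕ) = ∑ j ∈ Finset.range k, g j := by
  refine Finset.sum_bij' (fun (a : Fin n) (_ : a ∈ blk n k) => (a : ℕ))
    (fun (j : ℕ) (hj : j ∈ Finset.range k) =>
      (⟨j, lt_of_lt_of_le (mem_range.mp hj) hk⟩ : Fin n)) ?_ ?_ ?_ ?_ ?_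
  · intro a ha; exact mem_range.mpr (mem_blk.mp ha)
  · intro j hj; exact mem_blk.mpr (mem_range.mp hj)
  · intro a ha; exact Fin.ext rfl
  · intro j hj; rfl
  · intro a ha; rfl

lemma sum_blkc {n : ℕ} {M : Type*} [AddCommMonoid M] (hk : k ≤ n) (g : ℕ → M) :
    ∑ i ∈ (blk n k)ᶜ, g (i : ℕ) = ∑ j ∈ Finset.range (n - k), g (k + j) := by
  refine Finset.sum_bij' (fun (a : Fin n) (_ : a ∈ (blk n k)ᶜ) => (a : ℕ) - k)
    (fun (j : ℕ) (hj : j ∈ Finset.range (n - k)) =>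
      (⟨k + j, by have := mem_range.mp hj; omega⟩ : Fin n)) ?_ ?_ ?_ ?_ ?_
  · intro a ha
    rw [Finset.mem_compl, mem_blk, not_lt] at ha
    show (a : ℕ) - k ∈ Finset.range (n - k)
    exact mem_range.mpr (by have := a.isLt; omega)
  · intro j hj
    show (⟨k + j, _⟩ : Fin n) ∈ (blk n k)ᶜ
    rw [Finset.mem_compl, mem_blk, not_lt]
    exact Nat.le_add_right k j
  · intro a ha
    rw [Finset.mem_compl, mem_blk, not_lt] at ha
    show (⟨k + ((a : ℕ) - k), _⟩ : Fin n) = a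
    exact Fin.ext (by simp only []; omega)
  · intro j hj
    show ((⟨k + j, _⟩ : Fin n) : ℕ) - k = j
    simp
  · intro a ha
    rw [Finset.mem_compl, mem_blk, not_lt] at ha
    show g ((a : ℕ)) = g (k + ((a : ℕ) - k))
    have hh : k + ((a : ℕ) - k) = (a : ℕ) := by omega
    rw [hh]

end SumFirst

/-- Effect of a swap on sumFirst. -/
lemma sumFirst_swap (n k : ℕ) (α : Equiv.Perm (Fin n)) (a b : Fin n) (hab : a ≠ b)
    (hval : (α b : ℕ) = (α a : ℕ) + 1) :
    sumFirst n k (pvec (α * Equiv.swap a b)) =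
      sumFirst n k (pvec α) + (if (a : ℕ) < k then 1 else 0) - (if (b : ℕ) < k then 1 else 0) := by
  have hpt : ∀ i : Fin n, pvec (α * Equiv.swap a b) i =
      pvec α i + (if i = a then 1 else 0) - (if i = b then 1 else 0) := by
    intro i
    rcases eq_or_ne i a with rfl | hia
    · simp only [pvec_apply, if_pos rfl, if_neg hab, Equiv.Perm.mul_apply,
        Equiv.swap_apply_left, hval]
      push_cast; ring
    rcases eq_or_ne i b with rfl | hib
    · simp only [pvec_apply, if_neg hia, if_pos rfl, Equiv.Perm.mul_apply,
        Equiv.swap_apply_right, hval]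
      push_cast; ring
    · simp only [pvec_apply, if_neg hia, if_neg hib, Equiv.Perm.mul_apply,
        Equiv.swap_apply_of_ne_of_ne hia hib]
      ring
  rw [sumFirst_eq_blk, sumFirst_eq_blk]
  rw [Finset.sum_congr rfl (fun i (_ : i ∈ blk n k) => hpt i)]
  rw [Finset.sum_sub_distrib, Finset.sum_add_distrib]
  congr 1
  · congr 1
    rw [Finset.sum_ite_eq' (blk n k) a (fun _ => (1 : ℝ))]
    simp [mem_blk]
  · rw [Finset.sum_ite_eq' (blk n k) b (fun _ => (1 : ℝ))]
    simp [mem_blk]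

/-- distinct naturals: sum lower bound and equality case -/
lemma distinct_sum_bound : ∀ (N : ℕ) (t : Finset ℕ), t.card = N →
    (∑ i ∈ Finset.range N, i) ≤ ∑ x ∈ t, x ∧
    ((∑ x ∈ t, x) = ∑ i ∈ Finset.range N, i → t = Finset.range N) := by
  intro N
  induction N with
  | zero =>
    intro t ht
    rw [Finset.card_eq_zero] at ht
    simp [ht]
  | succ N ih =>
    intro t ht
    have hne : t.Nonempty := Finset.card_pos.mp (by omega)
    set M := t.max' hne with hM
    have hMem : M ∈ t := t.max'_mem hne
    have hsub : t ⊆ Finset.range (M + 1) := by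
      intro x hx
      exact mem_range.mpr (Nat.lt_succ_of_le (t.le_max' x hx))
    have h3 := Finset.card_le_card hsub
    rw [ht, Finset.card_range] at h3
    have hMge : N ≤ M := by omega
    have hcard' : (t.erase M).card = N := by
      rw [Finset.card_erase_of_mem hMem, ht]
      omega
    obtain ⟨h1, h2⟩ := ih (t.erase M) hcard'
    have hsum : ∑ x ∈ t, x = M + ∑ x ∈ t.erase M, x := (Finset.add_sum_erase t _ hMem).symm
    constructor
    · rw [Finset.sum_range_succ, hsum]
      omega
    · intro heq
      rw [Finset.sum_range_succ] at heq
      rw [hsum] at heq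
      have hMN : M = N ∧ ∑ x ∈ t.erase M, x = ∑ i ∈ Finset.range N, i := by
        constructor <;> omega
      have h4 := h2 hMN.2
      rw [← Finset.insert_erase hMem, h4, hMN.1, Finset.range_add_one]

/-- the Gauss-type splitting identity -/
lemma range_sum_split (k m : ℕ) :
    ∑ j ∈ Finset.range (k + m), j =
      (k * m + ∑ j ∈ Finset.range k, j) + ∑ j ∈ Finset.range m, j := by
  induction m with
  | zero => simp
  | succ m ih =>
    rw [show k + (m + 1) = (k + m) + 1 by omega, Finset.sum_range_succ, ih,
      Finset.sum_range_succ]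
    ring

/-- ordering invariants -/
def Ord1 (n k : ℕ) (γ : Equiv.Perm (Fin n)) : Prop :=
  ∀ i j : Fin n, (i : ℕ) < (j : ℕ) → (j : ℕ) < k → (γ i : ℕ) < (γ j : ℕ)

def Ord2 (n k : ℕ) (γ : Equiv.Perm (Fin n)) : Prop :=
  ∀ i j : Fin n, k ≤ (i : ℕ) → (i : ℕ) < (j : ℕ) → (γ i : ℕ) < (γ j : ℕ)

lemma ord_preserve (n k : ℕ) (α : Equiv.Perm (Fin n)) (a b : Fin n)
    (hab : a ≠ b) (hval : (α b : ℕ) = (α a : ℕ) + 1)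
    (ha : (a : ℕ) < k) (hb : k ≤ (b : ℕ))
    (H1 : Ord1 n k α) (H2 : Ord2 n k α) :
    Ord1 n k (α * Equiv.swap a b) ∧ Ord2 n k (α * Equiv.swap a b) := by
  have hv : ∀ i : Fin n, ((α * Equiv.swap a b) i : ℕ) =
      if i = a then (α b : ℕ) else if i = b then (α a : ℕ) else (α i : ℕ) := by
    intro i
    by_cases hia : i = a
    · rw [if_pos hia, hia]
      simp [Equiv.Perm.mul_apply, Equiv.swap_apply_left]
    · by_cases hib : i = b
      · rw [if_neg hia, if_pos hib, hib]
        simp [Equiv.Perm.mul_apply, Equiv.swap_apply_right]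
      · rw [if_neg hia, if_neg hib]
        simp [Equiv.Perm.mul_apply, Equiv.swap_apply_of_ne_of_ne hia hib]
  constructor
  · intro i j hij hjk
    have h0 : (α i : ℕ) < (α j : ℕ) := H1 i j hij hjk
    have hib : i ≠ b := by
      intro h
      have hh : (i : ℕ) = (b : ℕ) := by rw [h]
      omega
    have hjb : j ≠ b := by
      intro h
      have hh : (j : ℕ) = (b : ℕ) := by rw [h]
      omega
    rw [hv i, hv j, if_neg hib, if_neg hjb]
    by_cases hia : i = a
    · rw [if_pos hia]
      by_cases hja : j = a
      · exfalso
        have : (i : ℕ) = (j : ℕ) := by rw [hia, hja]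
        omega
      · rw [if_neg hja]
        have e1 : (α i : ℕ) = (α a : ℕ) := by rw [hia]
        have e2 : (α j : ℕ) ≠ (α b : ℕ) := perm_val_ne α j b hjb
        omega
    · rw [if_neg hia]
      by_cases hja : j = a
      · rw [if_pos hja]
        have e1 : (α j : ℕ) = (α a : ℕ) := by rw [hja]
        omega
      · rw [if_neg hja]
        exact h0
  · intro i j hik hij
    have h0 : (α i : ℕ) < (α j : ℕ) := H2 i j hik hij
    have hia : i ≠ a := by
      intro h
      have hh : (i : ℕ) = (a : ℕ) := by rw [h]
      omega
    have hja : j ≠ a := by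
      intro h
      have hh : (j : ℕ) = (a : ℕ) := by rw [h]
      omega
    rw [hv i, hv j, if_neg hia, if_neg hja]
    by_cases hib : i = b
    · rw [if_pos hib]
      by_cases hjb : j = b
      · exfalso
        have : (i : ℕ) = (j : ℕ) := by rw [hib, hjb]
        omega
      · rw [if_neg hjb]
        have e1 : (α i : ℕ) = (α b : ℕ) := by rw [hib]
        omega
    · rw [if_neg hib]
      by_cases hjb : j = b
      · rw [if_pos hjb]
        have e1 : (α j : ℕ) = (α b : ℕ) := by rw [hjb]
        have e2 : (α i : ℕ) ≠ (α a : ℕ) := perm_val_ne α i a hia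
        omega
      · rw [if_neg hjb]
        exact h0


section Bounds

variable {k : ℕ}

/-- sum of the first-block values of a permutation -/
def SB (n k : ℕ) (γ : Equiv.Perm (Fin n)) : ℕ := ∑ i ∈ blk n k, (γ i : ℕ)

lemma card_blk (hk : k ≤ n) : (blk n k).card = k := by
  rw [Finset.card_eq_sum_ones]
  rw [sum_blk (k := k) hk (fun _ => (1 : ℕ))]
  simp

lemma sumFirst_pvec (hk : k ≤ n) (γ : Equiv.Perm (Fin n)) :
    sumFirst n k (pvec γ) = ((SB n k γ + k : ℕ) : ℝ) := by
  rw [sumFirst_eq_blk]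
  have : ∀ i ∈ blk n k, pvec γ i = (((γ i : ℕ) : ℝ) + 1) := fun i _ => rfl
  rw [Finset.sum_congr rfl this, Finset.sum_add_distrib]
  push_cast [SB]
  rw [Finset.sum_const, card_blk hk]
  push_cast
  ring

/-- total value sum identity -/
lemma total_sum (hk : k ≤ n) (γ : Equiv.Perm (Fin n)) :
    SB n k γ + ∑ i ∈ (blk n k)ᶜ, (γ i : ℕ) =
      (k * (n - k) + ∑ j ∈ Finset.range k, j) + ∑ j ∈ Finset.range (n - k), j := by
  have h1 : SB n k γ + ∑ i ∈ (blk n k)ᶜ, (γ i : ℕ) = ∑ i : Fin n, (γ i : ℕ) := by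
    rw [SB]
    have : (blk n k)ᶜ = univ.filter (fun i : Fin n => ¬ (i : ℕ) < k) := by
      ext i; simp [blk]
    rw [this, blk]
    exact Finset.sum_filter_add_sum_filter_not univ _ _
  have h2 : ∑ i : Fin n, (γ i : ℕ) = ∑ i : Fin n, (i : ℕ) :=
    Equiv.sum_comp γ (fun w : Fin n => (w : ℕ))
  have h3 : ∑ i : Fin n, (i : ℕ) = ∑ j ∈ Finset.range n, j := by
    rw [Fin.sum_univ_eq_sum_range (fun j => j)]
  have h4 := range_sum_split k (n - k)
  rw [show k + (n - k) = n by omega] at h4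
  omega

/-- injectivity of values on the complement block -/
lemma sum_image_vals (γ : Equiv.Perm (Fin n)) (s : Finset (Fin n)) :
    (s.image (fun i => (γ i : ℕ))).card = s.card ∧
    ∑ x ∈ s.image (fun i => (γ i : ℕ)), x = ∑ i ∈ s, (γ i : ℕ) := by
  have hinj : Set.InjOn (fun i => (γ i : ℕ)) s := by
    intro x _ y _ h
    exact γ.injective (Fin.val_injective h)
  exact ⟨Finset.card_image_of_injOn hinj, Finset.sum_image (fun x hx y hy h => hinj hx hy h)⟩

lemma SB_le (hkn : k ≤ n) (γ : Equiv.Perm (Fin n)) :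
    SB n k γ ≤ k * (n - k) + ∑ j ∈ Finset.range k, j := by
  obtain ⟨hcard, hsum⟩ := sum_image_vals γ (blk n k)ᶜ
  have hcc : ((blk n k)ᶜ).card = n - k := by
    rw [Finset.card_compl, card_blk hkn]
    simp
  rw [hcc] at hcard
  have hlb := (distinct_sum_bound (n - k) _ hcard).1
  have htot := total_sum hkn γ
  omega

/-- the final-state values -/
lemma endpoint_vals (hkn : k < n) (γ : Equiv.Perm (Fin n))
    (H1 : Ord1 n k γ) (H2 : Ord2 n k γ)
    (hSB : SB n k γ = k * (n - k) + ∑ j ∈ Finset.range k, j) :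
    ∀ i : Fin n, (γ i : ℕ) = if (i : ℕ) < k then (n - k) + (i : ℕ) else (i : ℕ) - k := by
  have hkn' : k ≤ n := le_of_lt hkn
  -- second block sum
  have htot := total_sum hkn' γ
  have hsc : ∑ i ∈ (blk n k)ᶜ, (γ i : ℕ) = ∑ j ∈ Finset.range (n - k), j := by omega
  -- pointwise lower bound on second block
  have hlow2 : ∀ j : ℕ, ∀ h : k + j < n, j ≤ (γ ⟨k + j, h⟩ : ℕ) := by
    intro j
    induction j with
    | zero => intro h; exact Nat.zero_le _
    | succ j ih =>
      intro h
      have h' : k + j < n := by omega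
      have hord := H2 ⟨k + j, h'⟩ ⟨k + (j + 1), h⟩ (by simp) (by simp)
      have := ih h'
      omega
  have hlow2' : ∀ i ∈ (blk n k)ᶜ, (i : ℕ) - k ≤ (γ i : ℕ) := by
    intro i hi
    rw [Finset.mem_compl, mem_blk, not_lt] at hi
    have h : k + ((i : ℕ) - k) < n := by have := i.isLt; omega
    have := hlow2 ((i : ℕ) - k) h
    have he : (⟨k + ((i : ℕ) - k), h⟩ : Fin n) = i := Fin.ext (by simp; omega)
    rw [he] at this
    exact this
  -- the target second block sum
  have hsc2 : ∑ i ∈ (blk n k)ᶜ, ((i : ℕ) - k) = ∑ j ∈ Finset.range (n - k), j := by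
    rw [sum_blkc (k := k) hkn' (fun v => v - k)]
    apply Finset.sum_congr rfl
    intro j _
    omega
  -- pointwise equality on second block
  have heq2 : ∀ i ∈ (blk n k)ᶜ, (γ i : ℕ) = (i : ℕ) - k := by
    have hs : ∑ i ∈ (blk n k)ᶜ, ((i : ℕ) - k) = ∑ i ∈ (blk n k)ᶜ, (γ i : ℕ) := by
      rw [hsc, hsc2]
    intro i hi
    exact ((Finset.sum_eq_sum_iff_of_le hlow2').mp hs i hi).symm
  -- first block values are ≥ m
  have hge : ∀ i ∈ blk n k, (n - k) ≤ (γ i : ℕ) := by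
    intro i hi
    by_contra hlt
    push_neg at hlt
    have h : k + (γ i : ℕ) < n := by omega
    have h2 := heq2 ⟨k + (γ i : ℕ), h⟩ (by rw [Finset.mem_compl, mem_blk, not_lt]; simp)
    simp only [] at h2
    have h3 : (γ ⟨k + (γ i : ℕ), h⟩ : ℕ) = (γ i : ℕ) := by rw [h2]; omega
    have h4 : (⟨k + (γ i : ℕ), h⟩ : Fin n) = i := γ.injective (Fin.val_injective h3)
    have := congrArg Fin.val h4
    simp only [] at this
    rw [mem_blk] at hi
    omega
  -- first block pointwise lower bound
  have hlow1 : ∀ v : ℕ, ∀ h : v < k, (n - k) + v ≤ (γ ⟨v, by omega⟩ : ℕ) := by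
    intro v
    induction v with
    | zero =>
      intro h
      exact hge ⟨0, by omega⟩ (mem_blk.mpr h)
    | succ v ih =>
      intro h
      have h' : v < k := by omega
      have hord := H1 ⟨v, by omega⟩ ⟨v + 1, by omega⟩ (by simp) (by simpa using h)
      have := ih h'
      omega
  have hlow1' : ∀ i ∈ blk n k, (n - k) + (i : ℕ) ≤ (γ i : ℕ) := by
    intro i hi
    rw [mem_blk] at hi
    have := hlow1 (i : ℕ) hi
    have he : (⟨(i : ℕ), by omega⟩ : Fin n) = i := Fin.ext rfl
    rw [he] at this
    exact this
  have hsb2 : ∑ i ∈ blk n k, ((n - k) + (i : ℕ)) = k * (n - k) + ∑ j ∈ Finset.range k, j := by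
    rw [sum_blk (k := k) hkn' (fun v => (n - k) + v), Finset.sum_add_distrib, Finset.sum_const,
      Finset.card_range]
    simp [mul_comm]
  have heq1 : ∀ i ∈ blk n k, (γ i : ℕ) = (n - k) + (i : ℕ) := by
    have hs : ∑ i ∈ blk n k, ((n - k) + (i : ℕ)) = ∑ i ∈ blk n k, (γ i : ℕ) := by
      rw [hsb2, ← hSB]; rfl
    intro i hi
    exact ((Finset.sum_eq_sum_iff_of_le hlow1').mp hs i hi).symm
  -- conclude
  intro i
  by_cases hik : (i : ℕ) < k
  · rw [if_pos hik]
    exact heq1 i (mem_blk.mpr hik)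
  · rw [if_neg hik]
    exact heq2 i (by rw [Finset.mem_compl, mem_blk]; exact hik)

/-- the rotation permutation attaining the maximum -/
noncomputable def topPerm (n k : ℕ) (hk1 : 1 ≤ k) (hkn : k < n) : Equiv.Perm (Fin n) :=
  haveI : NeZero n := ⟨by omega⟩
  Equiv.addRight (⟨n - k, by omega⟩ : Fin n)

lemma topPerm_val (hk1 : 1 ≤ k) (hkn : k < n) (i : Fin n) :
    ((topPerm n k hk1 hkn) i : ℕ) = ((i : ℕ) + (n - k)) % n := by
  haveI : NeZero n := ⟨by omega⟩
  show ((i + (⟨n - k, by omega⟩ : Fin n)) : Fin n).val = ((i : ℕ) + (n - k)) % n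
  rw [Fin.add_def]

lemma SB_topPerm (hk1 : 1 ≤ k) (hkn : k < n) :
    SB n k (topPerm n k hk1 hkn) = k * (n - k) + ∑ j ∈ Finset.range k, j := by
  rw [SB]
  have : ∀ i ∈ blk n k, ((topPerm n k hk1 hkn) i : ℕ) = (n - k) + (i : ℕ) := by
    intro i hi
    rw [mem_blk] at hi
    rw [topPerm_val hk1 hkn i, Nat.mod_eq_of_lt (by omega)]
    omega
  rw [Finset.sum_congr rfl this]
  rw [sum_blk (k := k) (le_of_lt hkn) (fun v => (n - k) + v), Finset.sum_add_distrib,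
    Finset.sum_const, Finset.card_range]
  simp [mul_comm]

end Bounds


section PathAnalysis

variable {n k : ℕ}

lemma vert' (p : MonotonePathPerm n k) (h : ℕ) : IsPermVertex n (p.σ h) := by
  rcases le_or_gt h p.M with hle | hgt
  · exact p.vert h hle
  · rw [p.tail h (le_of_lt hgt)]
    exact p.vert p.M le_rfl

/-- the permutation at step h -/
noncomputable def pp (p : MonotonePathPerm n k) (h : ℕ) : Equiv.Perm (Fin n) :=
  Classical.choose ((isPermVertex_iff (p.σ h)).mp (vert' p h))

lemma pp_spec (p : MonotonePathPerm n k) (h : ℕ) : p.σ h = pvec (pp p h) :=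
  Classical.choose_spec ((isPermVertex_iff (p.σ h)).mp (vert' p h))

lemma ord1_one : Ord1 n k (1 : Equiv.Perm (Fin n)) := by
  intro i j hij hjk
  simpa using hij

lemma ord2_one : Ord2 n k (1 : Equiv.Perm (Fin n)) := by
  intro i j hik hij
  simpa using hij

lemma pp_zero (p : MonotonePathPerm n k) : pp p 0 = 1 := by
  apply pvec_injective
  rw [← pp_spec p 0, p.start]
  funext i
  simp [pvec]

lemma step_data (p : MonotonePathPerm n k) (h : ℕ) (hh : h < p.M) :
    ∃ a b : Fin n, a ≠ b ∧ pp p (h + 1) = pp p h * Equiv.swap a b ∧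
      ((pp p h) b : ℕ) = ((pp p h) a : ℕ) + 1 ∧ (a : ℕ) < k ∧ k ≤ (b : ℕ) := by
  have hedge := p.edge h hh
  rw [pp_spec p h, pp_spec p (h + 1)] at hedge
  obtain ⟨a, b, hab, heq, hval⟩ := edge_char (pp p h) (pp p (h + 1)) hedge
  have hinc := p.inc h hh
  rw [pp_spec p h, pp_spec p (h + 1), heq,
    sumFirst_swap n k (pp p h) a b hab hval] at hinc
  by_cases ha : (a : ℕ) < k
  · by_cases hb : (b : ℕ) < k
    · rw [if_pos ha, if_pos hb] at hinc; linarith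
    · exact ⟨a, b, hab, heq, hval, ha, not_lt.mp hb⟩
  · by_cases hb : (b : ℕ) < k
    · rw [if_neg ha, if_pos hb] at hinc; linarith
    · rw [if_neg ha, if_neg hb] at hinc; linarith

lemma step_sum (p : MonotonePathPerm n k) (h : ℕ) (hh : h < p.M) :
    sumFirst n k (p.σ (h + 1)) = sumFirst n k (p.σ h) + 1 := by
  obtain ⟨a, b, hab, heq, hval, ha, hb⟩ := step_data p h hh
  rw [pp_spec p h, pp_spec p (h + 1), heq, sumFirst_swap n k (pp p h) a b hab hval,
    if_pos ha, if_neg (not_lt.mpr hb)]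
  ring

lemma sum_along (p : MonotonePathPerm n k) : ∀ h ≤ p.M,
    sumFirst n k (p.σ h) = sumFirst n k (p.σ 0) + h := by
  intro h
  induction h with
  | zero => intro _; simp
  | succ h ih =>
    intro hle
    have hh : h < p.M := by omega
    rw [step_sum p h hh, ih (le_of_lt hh)]
    push_cast
    ring

lemma ords (p : MonotonePathPerm n k) : ∀ h ≤ p.M,
    Ord1 n k (pp p h) ∧ Ord2 n k (pp p h) := by
  intro h
  induction h with
  | zero => intro _; rw [pp_zero p]; exact ⟨ord1_one, ord2_one⟩
  | succ h ih =>
    intro hle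
    have hh : h < p.M := by omega
    obtain ⟨a, b, hab, heq, hval, ha, hb⟩ := step_data p h hh
    obtain ⟨H1, H2⟩ := ih (le_of_lt hh)
    rw [heq]
    exact ord_preserve n k (pp p h) a b hab hval ha hb H1 H2

lemma SB_one : SB n k (1 : Equiv.Perm (Fin n)) = if k ≤ n then ∑ j ∈ Finset.range k, j else SB n k 1 := by
  split_ifs with hk
  · rw [SB]
    have : ∀ i ∈ blk n k, ((1 : Equiv.Perm (Fin n)) i : ℕ) = (i : ℕ) := by
      intro i _; rfl
    rw [Finset.sum_congr rfl this, sum_blk (k := k) hk (fun v => v)]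
  · rfl

lemma SB_final (p : MonotonePathPerm n k) (hk1 : 1 ≤ k) (hkn : k < n) :
    SB n k (pp p p.M) = k * (n - k) + ∑ j ∈ Finset.range k, j := by
  have hle := SB_le (le_of_lt hkn) (pp p p.M)
  have hge : sumFirst n k (pvec (topPerm n k hk1 hkn)) ≤ sumFirst n k (p.σ p.M) :=
    p.max' _ (pvec_isPermVertex _)
  rw [pp_spec p p.M, sumFirst_pvec (le_of_lt hkn), sumFirst_pvec (le_of_lt hkn),
    Nat.cast_le, SB_topPerm hk1 hkn] at hge
  omega

lemma M_eq (p : MonotonePathPerm n k) (hk1 : 1 ≤ k) (hkn : k < n) :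
    p.M = k * (n - k) := by
  have h1 := sum_along p p.M le_rfl
  have h0 : p.σ 0 = pvec 1 := by
    rw [p.start]; funext i; simp [pvec]
  rw [pp_spec p p.M, h0, sumFirst_pvec (le_of_lt hkn), sumFirst_pvec (le_of_lt hkn),
    SB_final p hk1 hkn] at h1
  have h2 : SB n k (1 : Equiv.Perm (Fin n)) = ∑ j ∈ Finset.range k, j := by
    rw [SB_one, if_pos (le_of_lt hkn)]
  rw [h2] at h1
  have h3 : ((k * (n - k) + ∑ j ∈ Finset.range k, j + k : ℕ) : ℝ) =
      (((∑ j ∈ Finset.range k, j) + k + p.M : ℕ) : ℝ) := by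
    push_cast
    push_cast at h1
    linarith
  rw [Nat.cast_inj] at h3
  omega

lemma endpoint (p : MonotonePathPerm n k) (hk1 : 1 ≤ k) (hkn : k < n) :
    p.σ p.M = fun i : Fin n =>
      if (i : ℕ) < k then ((n - k + (i : ℕ) + 1 : ℕ) : ℝ)
      else (((i : ℕ) - k + 1 : ℕ) : ℝ) := by
  obtain ⟨H1, H2⟩ := ords p p.M le_rfl
  have hvals := endpoint_vals hkn (pp p p.M) H1 H2 (SB_final p hk1 hkn)
  rw [pp_spec p p.M]
  funext i
  rw [pvec_apply, hvals i]
  by_cases hik : (i : ℕ) < k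
  · rw [if_pos hik, if_pos hik]
    push_cast
    ring
  · rw [if_neg hik, if_neg hik]
    push_cast [Nat.cast_sub (not_lt.mp hik)]
    ring

end PathAnalysis


section Counting

variable {K : ℕ}

/-- count of positions `t < h` with `f t = q` -/
def CntF (K : ℕ) (f : ℕ → ℕ) (h q : ℕ) : ℕ :=
  (Finset.univ.filter (fun t : Fin K => (t : ℕ) < h ∧ f (t : ℕ) = q)).card

lemma CntF_zero (f : ℕ → ℕ) (q : ℕ) : CntF K f 0 q = 0 := by
  rw [CntF, Finset.card_eq_zero]
  ext t
  simp

lemma CntF_succ (f : ℕ → ℕ) (h q : ℕ) (hh : h < K) :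
    CntF K f (h + 1) q = CntF K f h q + (if f h = q then 1 else 0) := by
  rw [CntF, CntF]
  have hsplit : (Finset.univ.filter (fun t : Fin K => (t : ℕ) < h + 1 ∧ f (t : ℕ) = q)) =
      (Finset.univ.filter (fun t : Fin K => (t : ℕ) < h ∧ f (t : ℕ) = q)) ∪
      (Finset.univ.filter (fun t : Fin K => t = (⟨h, hh⟩ : Fin K) ∧ f (t : ℕ) = q)) := by
    ext t
    simp only [mem_filter, mem_univ, true_and, Finset.mem_union, Fin.ext_iff]
    constructor
    · rintro ⟨h1, h2⟩
      rcases Nat.lt_succ_iff_lt_or_eq.mp h1 with h3 | h3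
      · exact Or.inl ⟨h3, h2⟩
      · exact Or.inr ⟨h3, h2⟩
    · rintro (⟨h1, h2⟩ | ⟨h1, h2⟩)
      · exact ⟨by omega, h2⟩
      · exact ⟨by simp [h1], h2⟩
  rw [hsplit, Finset.card_union_of_disjoint]
  · congr 1
    by_cases hq : f h = q
    · rw [if_pos hq]
      have : (Finset.univ.filter (fun t : Fin K => t = (⟨h, hh⟩ : Fin K) ∧ f (t : ℕ) = q)) =
          {(⟨h, hh⟩ : Fin K)} := by
        ext t
        simp only [mem_filter, mem_univ, true_and, Finset.mem_singleton]
        constructor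
        · rintro ⟨h1, _⟩; exact h1
        · rintro rfl; exact ⟨rfl, hq⟩
      rw [this, Finset.card_singleton]
    · rw [if_neg hq]
      rw [Finset.card_eq_zero]
      ext t
      simp only [mem_filter, mem_univ, true_and, Finset.notMem_empty, iff_false, not_and]
      rintro rfl
      exact hq
  · rw [Finset.disjoint_left]
    intro t ht1 ht2
    simp only [mem_filter, mem_univ, true_and] at ht1 ht2
    rw [ht2.1] at ht1
    exact absurd ht1.1 (by simp)

lemma CntF_cap (f : ℕ → ℕ) (h q : ℕ) : CntF K f h q = CntF K f (min h K) q := by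
  rw [CntF, CntF]
  congr 1
  ext t
  simp only [mem_filter, mem_univ, true_and]
  have := t.isLt
  constructor
  · rintro ⟨h1, h2⟩; exact ⟨by omega, h2⟩
  · rintro ⟨h1, h2⟩; exact ⟨by omega, h2⟩

lemma CntF_le_card (f : ℕ → ℕ) (h q : ℕ) (N : ℕ)
    (htot : (Finset.univ.filter (fun t : Fin K => f (t : ℕ) = q)).card = N)
    (hh : h < K) (hfh : f h = q) : CntF K f h q < N := by
  rw [← htot, CntF]
  apply Finset.card_lt_card
  constructor
  · intro t ht
    simp only [mem_filter, mem_univ, true_and] at ht ⊢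
    exact ht.2
  · intro hsub
    have h1 : (⟨h, hh⟩ : Fin K) ∈ Finset.univ.filter (fun t : Fin K => f (t : ℕ) = q) := by
      simp only [mem_filter, mem_univ, true_and]
      exact hfh
    have h2 := hsub h1
    simp only [mem_filter, mem_univ, true_and] at h2
    omega

end Counting

section LatticeDefs

variable {n k : ℕ}

/-- letter at step `v` (junk value `k` out of range) -/
def letterN (L : LatticePerm k (n - k)) (v : ℕ) : ℕ :=
  if hv : v < k * (n - k) then ((L.a ⟨v, hv⟩ : Fin k) : ℕ) else k

lemma letterN_lt (L : LatticePerm k (n - k)) (v : ℕ) (hv : v < k * (n - k)) :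
    letterN L v < k := by
  rw [letterN, dif_pos hv]
  exact (L.a ⟨v, hv⟩).isLt

lemma letterN_eq (L : LatticePerm k (n - k)) (t : Fin (k * (n - k))) :
    letterN L (t : ℕ) = (L.a t : ℕ) := by
  rw [letterN, dif_pos t.isLt]

/-- number of steps at position `q` among the first `h` -/
def Fcnt (L : LatticePerm k (n - k)) (h q : ℕ) : ℕ :=
  CntF (k * (n - k)) (letterN L) h (k - 1 - q)

lemma Fcnt_prefix_eq (L : LatticePerm k (n - k)) (h : ℕ) (ℓ : ℕ) (hℓ : ℓ < k) :
    CntF (k * (n - k)) (letterN L) h ℓ =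
      (Finset.univ.filter (fun t : Fin (k * (n - k)) => (t : ℕ) < h ∧ (L.a t : ℕ) = ℓ)).card := by
  rw [CntF]
  congr 1
  apply Finset.filter_congr
  intro t _
  rw [letterN_eq L t]

lemma Fcnt_mono (L : LatticePerm k (n - k)) (h q : ℕ) (hq : q + 1 < k) :
    Fcnt L h q ≤ Fcnt L h (q + 1) := by
  rw [Fcnt, Fcnt]
  rw [Fcnt_prefix_eq L h (k - 1 - q) (by omega), Fcnt_prefix_eq L h (k - 1 - (q + 1)) (by omega)]
  have h1 : k - 1 - q = (k - 2 - q) + 1 := by omega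
  have h2 : k - 1 - (q + 1) = k - 2 - q := by omega
  rw [h1, h2]
  exact L.prefix' h (k - 2 - q) (by omega)

lemma Fcnt_mono_le (L : LatticePerm k (n - k)) (h : ℕ) :
    ∀ q' q : ℕ, q ≤ q' → q' < k → Fcnt L h q ≤ Fcnt L h q' := by
  intro q'
  induction q' with
  | zero => intro q hq _; have : q = 0 := by omega
            rw [this]
  | succ q' ih =>
    intro q hq hk'
    rcases Nat.lt_succ_iff_lt_or_eq.mp (Nat.lt_succ_of_le hq) with h1 | h1
    · exact le_trans (ih q (by omega) (by omega)) (Fcnt_mono L h q' hk')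
    · rw [h1]

lemma Fcnt_zero (L : LatticePerm k (n - k)) (q : ℕ) : Fcnt L 0 q = 0 := CntF_zero _ _

lemma Fcnt_succ (L : LatticePerm k (n - k)) (h q : ℕ) (hh : h < k * (n - k)) :
    Fcnt L (h + 1) q = Fcnt L h q + (if letterN L h = k - 1 - q then 1 else 0) :=
  CntF_succ _ h _ hh

lemma Fcnt_total (L : LatticePerm k (n - k)) (q : ℕ) (hq : q < k) :
    Fcnt L (k * (n - k)) q = n - k := by
  rw [Fcnt, Fcnt_prefix_eq L _ (k - 1 - q) (by omega)]
  have hc := L.count ⟨k - 1 - q, by omega⟩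
  have hset : (Finset.univ.filter (fun t : Fin (k * (n - k)) => (t : ℕ) < k * (n - k) ∧ (L.a t : ℕ) = k - 1 - q)) =
      (Finset.univ.filter (fun t : Fin (k * (n - k)) => L.a t = ⟨k - 1 - q, by omega⟩)) := by
    ext t
    simp only [mem_filter, mem_univ, true_and]
    constructor
    · rintro ⟨_, h2⟩
      exact Fin.ext h2
    · intro h2
      exact ⟨t.isLt, by rw [h2]⟩
  rw [hset, hc]

lemma Fcnt_lt_at_step (L : LatticePerm k (n - k)) (h : ℕ) (hh : h < k * (n - k)) :
    Fcnt L h (k - 1 - letterN L h) < n - k := by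
  have hℓ : letterN L h < k := letterN_lt L h hh
  have he : k - 1 - (k - 1 - letterN L h) = letterN L h := by omega
  rw [Fcnt, he]
  apply CntF_le_card (letterN L) h (letterN L h) (n - k) _ hh rfl
  have hc := L.count ⟨letterN L h, hℓ⟩
  have hset : (Finset.univ.filter (fun t : Fin (k * (n - k)) => letterN L (t : ℕ) = letterN L h)) =
      (Finset.univ.filter (fun t : Fin (k * (n - k)) => L.a t = ⟨letterN L h, hℓ⟩)) := by
    ext t
    simp only [mem_filter, mem_univ, true_and]
    rw [letterN_eq L t]
    constructor
    · intro h2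
      exact Fin.ext h2
    · intro h2
      rw [h2]
  rw [hset, hc]

lemma Fcnt_step_strict (L : LatticePerm k (n - k)) (h : ℕ) (hh : h < k * (n - k))
    (hq : (k - 1 - letterN L h) + 1 < k) :
    Fcnt L h (k - 1 - letterN L h) < Fcnt L h ((k - 1 - letterN L h) + 1) := by
  have hℓ : letterN L h < k := letterN_lt L h hh
  set q := k - 1 - letterN L h with hqdef
  have h1 := Fcnt_mono L (h + 1) q hq
  rw [Fcnt_succ L h q hh, Fcnt_succ L h (q + 1) hh] at h1
  have he1 : letterN L h = k - 1 - q := by omega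
  rw [if_pos he1] at h1
  have he2 : ¬ (letterN L h = k - 1 - (q + 1)) := by omega
  rw [if_neg he2] at h1
  omega

end LatticeDefs


section BuildPath

variable {n k : ℕ}

/-- successor value mod n -/
def nxt (hn : 0 < n) (x : Fin n) : Fin n := ⟨((x : ℕ) + 1) % n, Nat.mod_lt _ hn⟩

/-- position used at step `h` -/
def pOf (L : LatticePerm k (n - k)) (hk1 : 1 ≤ k) (hkn : k < n) (h : ℕ) : Fin n :=
  ⟨k - 1 - letterN L h, by omega⟩

lemma pOf_lt (L : LatticePerm k (n - k)) (hk1 : 1 ≤ k) (hkn : k < n) (h : ℕ) :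
    ((pOf L hk1 hkn h : Fin n) : ℕ) < k := by
  rw [pOf]
  simp only []
  omega

/-- the sequence of permutations built from the lattice word -/
noncomputable def pthFun (L : LatticePerm k (n - k)) (hk1 : 1 ≤ k) (hkn : k < n) : ℕ → Equiv.Perm (Fin n) :=
  fun h => Nat.rec (motive := fun _ => Equiv.Perm (Fin n)) 1
    (fun h' γ => if h' < k * (n - k) then
        γ * Equiv.swap (pOf L hk1 hkn h') (γ.symm (nxt (by omega) (γ (pOf L hk1 hkn h'))))
      else γ) h

lemma pthFun_zero (L : LatticePerm k (n - k)) (hk1 : 1 ≤ k) (hkn : k < n) :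
    pthFun L hk1 hkn 0 = 1 := rfl

lemma pthFun_succ_lt (L : LatticePerm k (n - k)) (hk1 : 1 ≤ k) (hkn : k < n) (h : ℕ)
    (hh : h < k * (n - k)) :
    pthFun L hk1 hkn (h + 1) = pthFun L hk1 hkn h *
      Equiv.swap (pOf L hk1 hkn h)
        ((pthFun L hk1 hkn h).symm (nxt (by omega) ((pthFun L hk1 hkn h) (pOf L hk1 hkn h)))) := by
  show (if h < k * (n - k) then _ else _) = _
  rw [if_pos hh]
  rfl

lemma pthFun_succ_ge (L : LatticePerm k (n - k)) (hk1 : 1 ≤ k) (hkn : k < n) (h : ℕ)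
    (hh : ¬ h < k * (n - k)) :
    pthFun L hk1 hkn (h + 1) = pthFun L hk1 hkn h := by
  show (if h < k * (n - k) then _ else _) = _
  rw [if_neg hh]
  rfl

lemma pthFun_freeze (L : LatticePerm k (n - k)) (hk1 : 1 ≤ k) (hkn : k < n) :
    ∀ h, k * (n - k) ≤ h → pthFun L hk1 hkn h = pthFun L hk1 hkn (k * (n - k)) := by
  intro h
  induction h with
  | zero => intro h0; rw [Nat.le_zero.mp h0]
  | succ h ih =>
    intro hle
    rcases Nat.lt_succ_iff_lt_or_eq.mp (Nat.lt_succ_of_le hle) with h1 | h1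
    · rw [pthFun_succ_ge L hk1 hkn h (by omega)]
      exact ih (by omega)
    · rw [h1]

lemma ord1_of_val (L : LatticePerm k (n - k)) (hk1 : 1 ≤ k) (hkn : k < n) (h : ℕ)
    (γ : Equiv.Perm (Fin n))
    (hval : ∀ i : Fin n, (i : ℕ) < k → (γ i : ℕ) = (i : ℕ) + Fcnt L h (i : ℕ)) :
    Ord1 n k γ := by
  intro i j hij hjk
  rw [hval i (by omega), hval j hjk]
  have := Fcnt_mono_le L h (j : ℕ) (i : ℕ) (by omega) hjk
  omega

/-- the master invariant -/
lemma pth_inv (L : LatticePerm k (n - k)) (hk1 : 1 ≤ k) (hkn : k < n) :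
    ∀ h, h ≤ k * (n - k) →
      (∀ i : Fin n, (i : ℕ) < k →
        ((pthFun L hk1 hkn h) i : ℕ) = (i : ℕ) + Fcnt L h (i : ℕ)) ∧
      Ord2 n k (pthFun L hk1 hkn h) := by
  intro h
  induction h with
  | zero =>
    intro _
    constructor
    · intro i hik
      rw [pthFun_zero, Fcnt_zero]
      rfl
    · rw [pthFun_zero]; exact ord2_one
  | succ h ih =>
    intro hle
    have hh : h < k * (n - k) := by omega
    obtain ⟨hv, hO2⟩ := ih (by omega)
    have hO1 : Ord1 n k (pthFun L hk1 hkn h) := ord1_of_val L hk1 hkn h _ hv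
    set γ := pthFun L hk1 hkn h with hγ
    set aa := pOf L hk1 hkn h with haa
    have hak : (aa : ℕ) < k := pOf_lt L hk1 hkn h
    have haval : (aa : ℕ) = k - 1 - letterN L h := rfl
    have hℓ : letterN L h < k := letterN_lt L h hh
    -- the current value at aa
    have hwval : (γ aa : ℕ) = (aa : ℕ) + Fcnt L h (aa : ℕ) := hv aa hak
    have hFlt : Fcnt L h (aa : ℕ) < n - k := by
      rw [haval]; exact Fcnt_lt_at_step L h hh
    have hw1 : (γ aa : ℕ) + 1 < n := by omega
    -- the next value and position b
    set b := γ.symm (nxt (by omega : 0 < n) (γ aa)) with hb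
    have hγb : γ b = nxt (by omega : 0 < n) (γ aa) := γ.apply_symm_apply _
    have hbval : (γ b : ℕ) = (γ aa : ℕ) + 1 := by
      rw [hγb, nxt]
      simp only []
      exact Nat.mod_eq_of_lt hw1
    have hab : aa ≠ b := by
      intro he
      rw [← he] at hbval
      omega
    -- b lies in the second block
    have hbk : k ≤ (b : ℕ) := by
      by_contra hbk'
      push_neg at hbk'
      have hbv := hv b hbk'
      have hba : (b : ℕ) ≠ (aa : ℕ) := fun he => hab (Fin.ext he.symm)
      rcases lt_or_gt_of_ne hba with hlt | hgt
      · -- b < aa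
        have hm := Fcnt_mono_le L h (aa : ℕ) (b : ℕ) (by omega) hak
        omega
      · -- aa < b < k
        have hq1 : (aa : ℕ) + 1 < k := by omega
        have hstrict : Fcnt L h (aa : ℕ) < Fcnt L h ((aa : ℕ) + 1) := by
          rw [haval]
          exact Fcnt_step_strict L h hh (by omega)
        have hm := Fcnt_mono_le L h (b : ℕ) ((aa : ℕ) + 1) (by omega) hbk'
        omega
    -- the step equation
    have hstep : pthFun L hk1 hkn (h + 1) = γ * Equiv.swap aa b :=
      pthFun_succ_lt L hk1 hkn h hh
    constructor
    · intro i hik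
      rw [hstep]
      have hib : i ≠ b := by
        intro he
        rw [he] at hik
        omega
      by_cases hia : i = aa
      · rw [hia]
        have h1 : ((γ * Equiv.swap aa b) aa : ℕ) = (γ b : ℕ) := by
          simp [Equiv.Perm.mul_apply, Equiv.swap_apply_left]
        rw [h1, hbval, hwval, Fcnt_succ L h (aa : ℕ) hh]
        have hcond : letterN L h = k - 1 - (aa : ℕ) := by omega
        rw [if_pos hcond]
        omega
      · have h1 : ((γ * Equiv.swap aa b) i : ℕ) = (γ i : ℕ) := by
          simp [Equiv.Perm.mul_apply, Equiv.swap_apply_of_ne_of_ne hia hib]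
        rw [h1, hv i hik, Fcnt_succ L h (i : ℕ) hh]
        have hiv : (i : ℕ) ≠ (aa : ℕ) := fun he => hia (Fin.ext he)
        have hcond : ¬ (letterN L h = k - 1 - (i : ℕ)) := by omega
        rw [if_neg hcond]
        omega
    · rw [hstep]
      exact (ord_preserve n k γ aa b hab hbval hak hbk hO1 hO2).2

/-- packaged step facts -/
lemma step_facts (L : LatticePerm k (n - k)) (hk1 : 1 ≤ k) (hkn : k < n) (h : ℕ)
    (hh : h < k * (n - k)) :
    ∃ b : Fin n, pOf L hk1 hkn h ≠ b ∧ k ≤ (b : ℕ) ∧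
      ((pthFun L hk1 hkn h) b : ℕ) = ((pthFun L hk1 hkn h) (pOf L hk1 hkn h) : ℕ) + 1 ∧
      pthFun L hk1 hkn (h + 1) = pthFun L hk1 hkn h * Equiv.swap (pOf L hk1 hkn h) b := by
  obtain ⟨hv, hO2⟩ := pth_inv L hk1 hkn h (le_of_lt hh)
  set γ := pthFun L hk1 hkn h with hγ
  set aa := pOf L hk1 hkn h with haa
  have hak : (aa : ℕ) < k := pOf_lt L hk1 hkn h
  have haval : (aa : ℕ) = k - 1 - letterN L h := rfl
  have hℓ : letterN L h < k := letterN_lt L h hh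
  have hwval : (γ aa : ℕ) = (aa : ℕ) + Fcnt L h (aa : ℕ) := hv aa hak
  have hFlt : Fcnt L h (aa : ℕ) < n - k := by
    rw [haval]; exact Fcnt_lt_at_step L h hh
  have hw1 : (γ aa : ℕ) + 1 < n := by omega
  set b := γ.symm (nxt (by omega : 0 < n) (γ aa)) with hb
  have hγb : γ b = nxt (by omega : 0 < n) (γ aa) := γ.apply_symm_apply _
  have hbval : (γ b : ℕ) = (γ aa : ℕ) + 1 := by
    rw [hγb, nxt]
    simp only []
    exact Nat.mod_eq_of_lt hw1
  have hab : aa ≠ b := by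
    intro he
    rw [← he] at hbval
    omega
  have hbk : k ≤ (b : ℕ) := by
    by_contra hbk'
    push_neg at hbk'
    have hbv := hv b hbk'
    have hba : (b : ℕ) ≠ (aa : ℕ) := fun he => hab (Fin.ext he.symm)
    rcases lt_or_gt_of_ne hba with hlt | hgt
    · have hm := Fcnt_mono_le L h (aa : ℕ) (b : ℕ) (by omega) hak
      omega
    · have hq1 : (aa : ℕ) + 1 < k := by omega
      have hstrict : Fcnt L h (aa : ℕ) < Fcnt L h ((aa : ℕ) + 1) := by
        rw [haval]
        exact Fcnt_step_strict L h hh (by omega)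
      have hm := Fcnt_mono_le L h (b : ℕ) ((aa : ℕ) + 1) (by omega) hbk'
      omega
  exact ⟨b, hab, hbk, hbval, pthFun_succ_lt L hk1 hkn h hh⟩

/-- the final state has the maximal first-block sum -/
lemma pth_final_SB (L : LatticePerm k (n - k)) (hk1 : 1 ≤ k) (hkn : k < n) :
    SB n k (pthFun L hk1 hkn (k * (n - k))) = k * (n - k) + ∑ j ∈ Finset.range k, j := by
  obtain ⟨hv, _⟩ := pth_inv L hk1 hkn (k * (n - k)) le_rfl
  rw [SB]
  have : ∀ i ∈ blk n k, ((pthFun L hk1 hkn (k * (n - k))) i : ℕ) = (n - k) + (i : ℕ) := by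
    intro i hi
    rw [mem_blk] at hi
    rw [hv i hi, Fcnt_total L (i : ℕ) hi]
    omega
  rw [Finset.sum_congr rfl this]
  rw [sum_blk (k := k) (le_of_lt hkn) (fun v => (n - k) + v), Finset.sum_add_distrib,
    Finset.sum_const, Finset.card_range]
  simp [mul_comm]

/-- the path built from a lattice word -/
noncomputable def buildPath (L : LatticePerm k (n - k)) (hk1 : 1 ≤ k) (hkn : k < n) :
    MonotonePathPerm n k where
  M := k * (n - k)
  σ h := pvec (pthFun L hk1 hkn h)
  start := by
    funext i
    show pvec (pthFun L hk1 hkn 0) i = _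
    rw [pthFun_zero]
    rfl
  vert h _ := pvec_isPermVertex _
  edge h hh := by
    obtain ⟨b, hab, hbk, hbval, hstep⟩ := step_facts L hk1 hkn h hh
    show IsEdgeOf (Permutohedron n) (pvec (pthFun L hk1 hkn h)) (pvec (pthFun L hk1 hkn (h + 1)))
    rw [hstep]
    exact edge_build (pthFun L hk1 hkn h) (pOf L hk1 hkn h) b hab hbval
  inc h hh := by
    obtain ⟨b, hab, hbk, hbval, hstep⟩ := step_facts L hk1 hkn h hh
    show sumFirst n k (pvec (pthFun L hk1 hkn h)) < sumFirst n k (pvec (pthFun L hk1 hkn (h + 1)))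
    rw [hstep, sumFirst_swap n k _ _ _ hab hbval,
      if_pos (pOf_lt L hk1 hkn h), if_neg (not_lt.mpr hbk)]
    linarith
  max' x hx := by
    obtain ⟨ξ, hξ⟩ := (isPermVertex_iff x).mp hx
    show sumFirst n k x ≤ sumFirst n k (pvec (pthFun L hk1 hkn (k * (n - k))))
    rw [hξ, sumFirst_pvec (le_of_lt hkn), sumFirst_pvec (le_of_lt hkn), Nat.cast_le,
      pth_final_SB L hk1 hkn]
    have := SB_le (le_of_lt hkn) ξ
    omega
  tail h hle := by
    show pvec (pthFun L hk1 hkn h) = pvec (pthFun L hk1 hkn (k * (n - k)))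
    exact congrArg pvec (pthFun_freeze L hk1 hkn h hle)

end BuildPath


section Bijection

variable {n k : ℕ}

lemma MonotonePathPerm.ext' (p q : MonotonePathPerm n k) (hM : p.M = q.M) (hσ : p.σ = q.σ) :
    p = q := by
  cases p; cases q
  simp only [] at hM hσ
  subst hM; subst hσ
  rfl

lemma LatticePerm.ext' {k m : ℕ} (L L' : LatticePerm k m) (ha : L.a = L'.a) : L = L' := by
  cases L; cases L'
  simp only [] at ha
  subst ha
  rfl

/-- chosen first-block position of step `h` of a path -/
noncomputable def aOfN (p : MonotonePathPerm n k) (hn : 0 < n) (h : ℕ) : Fin n :=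
  if hh : h < p.M then (step_data p h hh).choose else ⟨0, hn⟩

lemma aOfN_spec (p : MonotonePathPerm n k) (hn : 0 < n) (h : ℕ) (hh : h < p.M) :
    ∃ b : Fin n, aOfN p hn h ≠ b ∧ pp p (h + 1) = pp p h * Equiv.swap (aOfN p hn h) b ∧
      ((pp p h) b : ℕ) = ((pp p h) (aOfN p hn h) : ℕ) + 1 ∧
      ((aOfN p hn h : Fin n) : ℕ) < k ∧ k ≤ (b : ℕ) := by
  have he : aOfN p hn h = (step_data p h hh).choose := dif_pos hh
  rw [he]
  obtain ⟨b, h1, h2, h3, h4, h5⟩ := (step_data p h hh).choose_spec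
  exact ⟨b, h1, h2, h3, h4, h5⟩

/-- value of the chosen position -/
noncomputable def aVal (p : MonotonePathPerm n k) (hn : 0 < n) (v : ℕ) : ℕ :=
  ((aOfN p hn v : Fin n) : ℕ)

/-- the counting invariant along an arbitrary path -/
lemma path_inv (p : MonotonePathPerm n k) (hk1 : 1 ≤ k) (hkn : k < n) :
    ∀ h, h ≤ p.M → ∀ i : Fin n, (i : ℕ) < k →
      ((pp p h) i : ℕ) = (i : ℕ) + CntF (k * (n - k)) (aVal p (by omega)) h (i : ℕ) := by
  have hn : 0 < n := by omega
  have hM := M_eq p hk1 hkn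
  intro h
  induction h with
  | zero =>
    intro _ i hik
    rw [pp_zero, CntF_zero]
    rfl
  | succ h ih =>
    intro hle i hik
    have hh : h < p.M := by omega
    obtain ⟨b, hab, hstep, hbval, hak, hbk⟩ := aOfN_spec p hn h hh
    set aa := aOfN p hn h with haa
    have hib : i ≠ b := by
      intro he
      rw [he] at hik
      omega
    rw [hstep]
    rw [CntF_succ _ h _ (by omega)]
    by_cases hia : i = aa
    · rw [hia]
      have h1 : ((pp p h * Equiv.swap aa b) aa : ℕ) = ((pp p h) b : ℕ) := by
        simp [Equiv.Perm.mul_apply, Equiv.swap_apply_left]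
      rw [h1, hbval, ih (le_of_lt hh) aa hak]
      have hcond : aVal p hn h = (aa : ℕ) := rfl
      rw [if_pos hcond]
      omega
    · have h1 : ((pp p h * Equiv.swap aa b) i : ℕ) = ((pp p h) i : ℕ) := by
        simp [Equiv.Perm.mul_apply, Equiv.swap_apply_of_ne_of_ne hia hib]
      rw [h1, ih (le_of_lt hh) i hik]
      have hcond : ¬ (aVal p hn h = (i : ℕ)) := by
        intro he
        exact hia (Fin.ext he.symm)
      rw [if_neg hcond]
      omega

lemma aVal_lt (p : MonotonePathPerm n k) (hk1 : 1 ≤ k) (hkn : k < n)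
    (h : ℕ) (hh : h < p.M) : aVal p (by omega) h < k := by
  obtain ⟨b, _, _, _, hak, _⟩ := aOfN_spec p (by omega) h hh
  exact hak

/-- the lattice word of a path -/
noncomputable def pathWord (p : MonotonePathPerm n k) (hk1 : 1 ≤ k) (hkn : k < n) :
    Fin (k * (n - k)) → Fin k :=
  fun t => ⟨k - 1 - aVal p (by omega) (t : ℕ), by omega⟩

lemma endpoint_cnt (p : MonotonePathPerm n k) (hk1 : 1 ≤ k) (hkn : k < n)
    (q : ℕ) (hq : q < k) :
    CntF (k * (n - k)) (aVal p (by omega : (0:ℕ) < n)) p.M q = n - k := by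
  obtain ⟨H1, H2⟩ := ords p p.M le_rfl
  have hvals := endpoint_vals hkn (pp p p.M) H1 H2 (SB_final p hk1 hkn)
  have hinv := path_inv p hk1 hkn p.M le_rfl ⟨q, by omega⟩ hq
  have hv := hvals ⟨q, by omega⟩
  rw [if_pos (show ((⟨q, by omega⟩ : Fin n) : ℕ) < k from hq)] at hv
  rw [hv] at hinv
  simp only [] at hinv ⊢
  omega

/-- the lattice permutation associated with a path -/
noncomputable def pathToLattice (p : MonotonePathPerm n k) (hk1 : 1 ≤ k) (hkn : k < n) :
    LatticePerm k (n - k) where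
  a := pathWord p hk1 hkn
  count := by
    intro j
    have hM := M_eq p hk1 hkn
    have hset : (Finset.univ.filter (fun t : Fin (k * (n - k)) => pathWord p hk1 hkn t = j)) =
        (Finset.univ.filter (fun t : Fin (k * (n - k)) =>
          (t : ℕ) < p.M ∧ aVal p (by omega : (0:ℕ) < n) (t : ℕ) = k - 1 - (j : ℕ))) := by
      ext t
      simp only [mem_filter, mem_univ, true_and]
      have ht : (t : ℕ) < p.M := by rw [hM]; exact t.isLt
      have hal := aVal_lt p hk1 hkn (t : ℕ) ht
      rw [pathWord, Fin.ext_iff]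
      simp only []
      constructor
      · intro h1
        refine ⟨ht, by omega⟩
      · rintro ⟨_, h2⟩
        have := j.isLt
        omega
    rw [hset]
    have := endpoint_cnt p hk1 hkn (k - 1 - (j : ℕ)) (by have := j.isLt; omega)
    rw [CntF] at this
    rw [← hM] at this ⊢
    exact this
  prefix' := by
    intro p' i hik
    have hM := M_eq p hk1 hkn
    have hn : (0:ℕ) < n := by omega
    -- identify the two filters with CntF at min p' M
    have hgen : ∀ q : ℕ, q < k →
        (Finset.univ.filter (fun t : Fin (k * (n - k)) =>
          (t : ℕ) < p' ∧ ((pathWord p hk1 hkn t : Fin k) : ℕ) = q)).card =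
        CntF (k * (n - k)) (aVal p hn) (min p' p.M) (k - 1 - q) := by
      intro q hq
      rw [CntF]
      congr 1
      ext t
      simp only [mem_filter, mem_univ, true_and]
      have ht : (t : ℕ) < p.M := by rw [hM]; exact t.isLt
      have hal := aVal_lt p hk1 hkn (t : ℕ) ht
      rw [pathWord]
      simp only []
      constructor
      · rintro ⟨h1, h2⟩
        exact ⟨by omega, by omega⟩
      · rintro ⟨h1, h2⟩
        exact ⟨by omega, by omega⟩
    rw [hgen (i + 1) hik, hgen i (by omega)]
    -- use the first-block ordering at time min p' M
    set h0 := min p' p.M with hh0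
    have hle : h0 ≤ p.M := min_le_right _ _
    obtain ⟨H1, _⟩ := ords p h0 hle
    have hq1 : k - 1 - i < k := by omega
    have hq2 : k - 1 - (i + 1) < k := by omega
    have hlt : (k - 1 - (i + 1) : ℕ) < k - 1 - i := by omega
    have hord := H1 ⟨k - 1 - (i + 1), by omega⟩ ⟨k - 1 - i, by omega⟩ (by simpa using hlt)
      (by simpa using hq1)
    have hi1 := path_inv p hk1 hkn h0 hle ⟨k - 1 - (i + 1), by omega⟩ (by simpa using hq2)
    have hi2 := path_inv p hk1 hkn h0 hle ⟨k - 1 - i, by omega⟩ (by simpa using hq1)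
    rw [hi1, hi2] at hord
    simp only [] at hord
    omega

lemma build_pp (L : LatticePerm k (n - k)) (hk1 : 1 ≤ k) (hkn : k < n) (h : ℕ) :
    pp (buildPath L hk1 hkn) h = pthFun L hk1 hkn h := by
  apply pvec_injective
  rw [← pp_spec]
  rfl

lemma buildPath_M (L : LatticePerm k (n - k)) (hk1 : 1 ≤ k) (hkn : k < n) :
    (buildPath L hk1 hkn).M = k * (n - k) := rfl

lemma right_inv_lemma (L : LatticePerm k (n - k)) (hk1 : 1 ≤ k) (hkn : k < n) :
    pathToLattice (buildPath L hk1 hkn) hk1 hkn = L := by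
  apply LatticePerm.ext'
  funext t
  have hn : (0:ℕ) < n := by omega
  set p' := buildPath L hk1 hkn with hp'
  have ht : (t : ℕ) < p'.M := t.isLt
  obtain ⟨b, hab, hstep, hbval, hak, hbk⟩ := aOfN_spec p' hn (t : ℕ) ht
  obtain ⟨b0, hab0, hbk0, hbval0, hstep0⟩ := step_facts L hk1 hkn (t : ℕ) t.isLt
  -- identify the two step descriptions
  have hpp : ∀ h, pp p' h = pthFun L hk1 hkn h := build_pp L hk1 hkn
  rw [hpp, hpp, hstep0] at hstep
  have hsw : Equiv.swap (pOf L hk1 hkn (t : ℕ)) b0 = Equiv.swap (aOfN p' hn (t : ℕ)) b :=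
    mul_left_cancel hstep
  have hach : aOfN p' hn (t : ℕ) = pOf L hk1 hkn (t : ℕ) := by
    have h1 : Equiv.swap (pOf L hk1 hkn (t : ℕ)) b0 (aOfN p' hn (t : ℕ)) = b := by
      rw [hsw, Equiv.swap_apply_left]
    by_cases hc1 : aOfN p' hn (t : ℕ) = pOf L hk1 hkn (t : ℕ)
    · exact hc1
    · exfalso
      by_cases hc2 : aOfN p' hn (t : ℕ) = b0
      · rw [hc2, Equiv.swap_apply_right] at h1
        rw [hc2] at hak
        omega
      · rw [Equiv.swap_apply_of_ne_of_ne hc1 hc2] at h1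
        exact hab h1
  -- conclude
  show pathWord p' hk1 hkn t = L.a t
  apply Fin.ext
  rw [pathWord]
  simp only []
  have h2 : aVal p' hn (t : ℕ) = ((pOf L hk1 hkn (t : ℕ) : Fin n) : ℕ) := by
    rw [aVal, hach]
  have h3 : ((pOf L hk1 hkn (t : ℕ) : Fin n) : ℕ) = k - 1 - letterN L (t : ℕ) := rfl
  have h4 : letterN L (t : ℕ) = (L.a t : ℕ) := letterN_eq L t
  have h5 := (L.a t).isLt
  have hval' : aVal p' (by omega) (t : ℕ) = aVal p' hn (t : ℕ) := rfl
  rw [hval', h2, h3, h4]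
  omega

lemma left_inv_lemma (p : MonotonePathPerm n k) (hk1 : 1 ≤ k) (hkn : k < n) :
    buildPath (pathToLattice p hk1 hkn) hk1 hkn = p := by
  have hn : (0:ℕ) < n := by omega
  have hM := M_eq p hk1 hkn
  set L := pathToLattice p hk1 hkn with hL
  -- the permutations agree up to time M
  have hagree : ∀ h, h ≤ p.M → pthFun L hk1 hkn h = pp p h := by
    intro h
    induction h with
    | zero =>
      intro _
      rw [pthFun_zero, pp_zero]
    | succ h ih =>
      intro hle
      have hh : h < p.M := by omega
      have hhK : h < k * (n - k) := by omega
      obtain ⟨b, hab, hstep, hbval, hak, hbk⟩ := aOfN_spec p hn h hh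
      set aa := aOfN p hn h with haa
      have hγ := ih (le_of_lt hh)
      rw [pthFun_succ_lt L hk1 hkn h hhK, hγ, hstep]
      congr 1
      -- the positions agree
      have hpos : pOf L hk1 hkn h = aa := by
        apply Fin.ext
        have h1 : ((pOf L hk1 hkn h : Fin n) : ℕ) = k - 1 - letterN L h := rfl
        have h2 : letterN L h = (L.a ⟨h, hhK⟩ : ℕ) := by
          rw [letterN, dif_pos hhK]
        have h3 : (L.a ⟨h, hhK⟩ : ℕ) = k - 1 - aVal p (by omega) h := by
          rw [hL]
          show ((pathWord p hk1 hkn ⟨h, hhK⟩ : Fin k) : ℕ) = _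
          rw [pathWord]
        have h4 : aVal p (by omega) h = (aa : ℕ) := rfl
        rw [h1, h2, h3, h4]
        omega
      rw [hpos]
      -- the second entries agree
      congr 1
      have h5 : nxt (by omega) ((pp p h) aa) = (pp p h) b := by
        apply Fin.ext
        rw [nxt]
        simp only []
        rw [hbval]
        exact Nat.mod_eq_of_lt (hbval ▸ ((pp p h) b).isLt)
      rw [h5]
      exact Equiv.symm_apply_apply _ _
  apply MonotonePathPerm.ext'
  · rw [buildPath_M, hM]
  · funext h
    show pvec (pthFun L hk1 hkn h) = p.σ h
    rcases le_or_gt h p.M with hle | hgt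
    · rw [hagree h hle, ← pp_spec]
    · have h1 : pthFun L hk1 hkn h = pthFun L hk1 hkn (k * (n - k)) :=
        pthFun_freeze L hk1 hkn h (by omega)
      rw [h1, hagree (k * (n - k)) (by omega)]
      rw [← pp_spec]
      rw [show k * (n - k) = p.M from hM.symm]
      exact (p.tail h (le_of_lt hgt)).symm

end Bijection

/-- for `1 ≤ k < n`, the `𝟙_{[k]}`-monotone paths on `Π_{n−1}`
starting at the identity are in bijection with `k × (n−k)` rectangular lattice
permutations; every such path has length `k(n−k)` and ends at the permutation
`(n−k+1,…,n,1,…,n−k)`. -/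
theorem monotone_paths_lattice_perm_bijection
    (n k : ℕ) (hk : 1 ≤ k) (hkn : k < n) :
    Nonempty (MonotonePathPerm n k ≃ LatticePerm k (n - k)) ∧
    ∀ p : MonotonePathPerm n k,
      p.M = k * (n - k) ∧
      p.σ p.M = fun i : Fin n =>
        if (i : ℕ) < k then ((n - k + (i : ℕ) + 1 : ℕ) : ℝ)
        else (((i : ℕ) - k + 1 : ℕ) : ℝ) := by
  constructor
  · exact ⟨{ toFun := fun p => pathToLattice p hk hkn,
             invFun := fun L => buildPath L hk hkn,
             left_inv := fun p => left_inv_lemma p hk hkn,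
             right_inv := fun L => right_inv_lemma L hk hkn }⟩
  · intro p
    exact ⟨M_eq p hk hkn, endpoint p hk hkn⟩
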